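/- arXiv:2502.07977 — 12 statements merged into one kernel-verified Lean document; each statement's English description precedes it below -/
import Mathlib

section
/- Let p ≥ 1 and let Q(1), Q(2), …, Q(p) be row stochastic M×M real matrices. Then δ(Q(1)·Q(2)·⋯·Q(p)) ≤ ∏_{i=1}^{p} λ(Q(i)). -/
/-- A square real matrix is row stochastic if all its entries are nonnegative and
each of its rows sums to 1. -/
def RowStochastic {M : ℕ} (A : Matrix (Fin M) (Fin M) ℝ) : Prop :=
  (∀ i j, 0 ≤ A i j) ∧ ∀ i, ∑ j, A i j = 1

/-- Coefficient of ergodicity `δ(A) = max_j max_{i₁,i₂} |A_{i₁ j} − A_{i₂ j}|`. -/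
noncomputable def ergDelta {M : ℕ} (A : Matrix (Fin M) (Fin M) ℝ) : ℝ :=
  ⨆ j, ⨆ i₁, ⨆ i₂, |A i₁ j - A i₂ j|

/-- Coefficient of ergodicity `λ(A) = 1 − min_{i₁,i₂} ∑_j min(A_{i₁ j}, A_{i₂ j})`. -/
noncomputable def ergLambda {M : ℕ} (A : Matrix (Fin M) (Fin M) ℝ) : ℝ :=
  1 - ⨅ i₁, ⨅ i₂, ∑ j, min (A i₁ j) (A i₂ j)

section aux
variable {M : ℕ}

lemma le_ergDelta (hM : 0 < M) (A : Matrix (Fin M) (Fin M) ℝ) (j i₁ i₂ : Fin M) :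
    |A i₁ j - A i₂ j| ≤ ergDelta A := by
  haveI : Nonempty (Fin M) := ⟨⟨0, hM⟩⟩
  have h1 : |A i₁ j - A i₂ j| ≤ ⨆ i₂', |A i₁ j - A i₂' j| :=
    le_ciSup (f := fun i₂' => |A i₁ j - A i₂' j|) (Set.finite_range _).bddAbove i₂
  have h2 : (⨆ i₂', |A i₁ j - A i₂' j|) ≤ ⨆ i₁', ⨆ i₂', |A i₁' j - A i₂' j| :=
    le_ciSup (Set.finite_range fun i₁' => ⨆ i₂', |A i₁' j - A i₂' j|).bddAbove i₁
  have h3 : (⨆ i₁', ⨆ i₂', |A i₁' j - A i₂' j|) ≤ ergDelta A :=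
    le_ciSup (Set.finite_range fun j' => ⨆ i₁', ⨆ i₂', |A i₁' j' - A i₂' j'|).bddAbove j
  exact h1.trans (h2.trans h3)

lemma ergDelta_le (hM : 0 < M) {A : Matrix (Fin M) (Fin M) ℝ} {c : ℝ}
    (h : ∀ j i₁ i₂, |A i₁ j - A i₂ j| ≤ c) : ergDelta A ≤ c := by
  haveI : Nonempty (Fin M) := ⟨⟨0, hM⟩⟩
  exact ciSup_le fun j => ciSup_le fun i₁ => ciSup_le fun i₂ => h j i₁ i₂

lemma ergDelta_nonneg (hM : 0 < M) (A : Matrix (Fin M) (Fin M) ℝ) : 0 ≤ ergDelta A := by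
  have := le_ergDelta hM A ⟨0, hM⟩ ⟨0, hM⟩ ⟨0, hM⟩
  simpa using this.trans' (abs_nonneg _)

lemma one_sub_le_ergLambda (hM : 0 < M) (A : Matrix (Fin M) (Fin M) ℝ) (i₁ i₂ : Fin M) :
    1 - ∑ j, min (A i₁ j) (A i₂ j) ≤ ergLambda A := by
  haveI : Nonempty (Fin M) := ⟨⟨0, hM⟩⟩
  have h1 : (⨅ i₁', ⨅ i₂', ∑ j, min (A i₁' j) (A i₂' j)) ≤
      ⨅ i₂', ∑ j, min (A i₁ j) (A i₂' j) :=
    ciInf_le (Set.finite_range fun i₁' => ⨅ i₂', ∑ j, min (A i₁' j) (A i₂' j)).bddBelow i₁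
  have h2 : (⨅ i₂', ∑ j, min (A i₁ j) (A i₂' j)) ≤ ∑ j, min (A i₁ j) (A i₂ j) :=
    ciInf_le (Set.finite_range _).bddBelow i₂
  have := h1.trans h2
  unfold ergLambda
  linarith

lemma ergLambda_nonneg (hM : 0 < M) {A : Matrix (Fin M) (Fin M) ℝ}
    (hA : RowStochastic A) : 0 ≤ ergLambda A := by
  have h := one_sub_le_ergLambda hM A ⟨0, hM⟩ ⟨0, hM⟩
  simp only [min_self] at h
  rw [hA.2] at h
  linarith

lemma ergDelta_le_ergLambda (hM : 0 < M) {A : Matrix (Fin M) (Fin M) ℝ}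
    (hA : RowStochastic A) : ergDelta A ≤ ergLambda A := by
  refine ergDelta_le hM fun j i₁ i₂ => ?_
  have key : ∀ a b : Fin M, A a j - A b j ≤ ergLambda A := by
    intro a b
    have h1 : A a j - min (A a j) (A b j) ≤ ∑ j', (A a j' - min (A a j') (A b j')) :=
      Finset.single_le_sum (f := fun j' => A a j' - min (A a j') (A b j'))
        (fun i _ => by simp [min_le_left]) (Finset.mem_univ j)
    have h2 : ∑ j', (A a j' - min (A a j') (A b j')) = 1 - ∑ j', min (A a j') (A b j') := by
      rw [Finset.sum_sub_distrib, hA.2]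
    have h3 := one_sub_le_ergLambda hM A a b
    have h4 : A a j - A b j ≤ A a j - min (A a j) (A b j) := by
      have := min_le_right (A a j) (A b j); linarith
    linarith
  exact abs_sub_le_iff.mpr ⟨key i₁ i₂, key i₂ i₁⟩

lemma sum_mul_le_aux (hM : 0 < M) (d g : Fin M → ℝ) (hd : ∑ k, d k = 0) {c : ℝ}
    (hg : ∀ k₁ k₂, g k₁ - g k₂ ≤ c) :
    ∑ k, d k * g k ≤ (∑ k, max (d k) 0) * c := by
  haveI : Nonempty (Fin M) := ⟨⟨0, hM⟩⟩
  obtain ⟨k₀, -, hk₀⟩ := Finset.exists_min_image Finset.univ g Finset.univ_nonempty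
  have e1 : ∑ k, d k * g k = ∑ k, d k * (g k - g k₀) := by
    rw [Finset.sum_congr rfl (fun k _ => mul_sub (d k) (g k) (g k₀)),
      Finset.sum_sub_distrib, ← Finset.sum_mul, hd]
    ring
  rw [e1, Finset.sum_mul]
  refine Finset.sum_le_sum fun k _ => ?_
  have h0 : 0 ≤ g k - g k₀ := by have := hk₀ k (Finset.mem_univ k); linarith
  calc d k * (g k - g k₀) ≤ max (d k) 0 * (g k - g k₀) :=
        mul_le_mul_of_nonneg_right (le_max_left _ _) h0
    _ ≤ max (d k) 0 * c :=
        mul_le_mul_of_nonneg_left (hg k k₀) (le_max_right _ _)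

lemma ergDelta_mul_le (hM : 0 < M) {A : Matrix (Fin M) (Fin M) ℝ}
    (B : Matrix (Fin M) (Fin M) ℝ) (hA : RowStochastic A) :
    ergDelta (A * B) ≤ ergLambda A * ergDelta B := by
  refine ergDelta_le hM fun j i₁ i₂ => ?_
  set d : Fin M → ℝ := fun k => A i₁ k - A i₂ k with hd_def
  have hdsum : ∑ k, d k = 0 := by
    simp only [hd_def, Finset.sum_sub_distrib, hA.2, sub_self]
  have hdsum' : ∑ k, (-d k) = 0 := by simp [Finset.sum_neg_distrib, hdsum]
  set S : ℝ := ∑ k, max (d k) 0 with hS_def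
  have hSneg : ∑ k, max (-d k) 0 = S := by
    have : ∀ k, max (-d k) 0 = max (d k) 0 - d k := by
      intro k; rcases le_total (d k) 0 with h | h
      · rw [max_eq_left (by linarith), max_eq_right h]; ring
      · rw [max_eq_right (by linarith), max_eq_left h]; ring
    rw [Finset.sum_congr rfl fun k _ => this k, Finset.sum_sub_distrib, hdsum, hS_def]
    ring
  have hSlam : S ≤ ergLambda A := by
    have e : ∀ k, max (d k) 0 = A i₁ k - min (A i₁ k) (A i₂ k) := by
      intro k
      rcases le_total (A i₁ k) (A i₂ k) with h | h
      · rw [min_eq_left h, max_eq_right (by simp [hd_def]; linarith)]; ring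
      · rw [min_eq_right h, max_eq_left (by simp [hd_def]; linarith)]
    have : S = 1 - ∑ k, min (A i₁ k) (A i₂ k) := by
      rw [hS_def, Finset.sum_congr rfl fun k _ => e k, Finset.sum_sub_distrib, hA.2]
    rw [this]; exact one_sub_le_ergLambda hM A i₁ i₂
  have hδB : 0 ≤ ergDelta B := ergDelta_nonneg hM B
  have hg : ∀ k₁ k₂, B k₁ j - B k₂ j ≤ ergDelta B := fun k₁ k₂ =>
    (le_abs_self _).trans (le_ergDelta hM B j k₁ k₂)
  have hdiff : (A * B) i₁ j - (A * B) i₂ j = ∑ k, d k * B k j := by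
    simp only [Matrix.mul_apply, hd_def, ← Finset.sum_sub_distrib, sub_mul]
  have h1 : ∑ k, d k * B k j ≤ S * ergDelta B :=
    sum_mul_le_aux hM d (fun k => B k j) hdsum hg
  have h2 : ∑ k, (-d k) * B k j ≤ S * ergDelta B := by
    have := sum_mul_le_aux hM (fun k => -d k) (fun k => B k j) hdsum' hg
    rwa [hSneg] at this
  have h2' : -(∑ k, d k * B k j) ≤ S * ergDelta B := by
    rw [← Finset.sum_neg_distrib]
    simpa [neg_mul] using h2
  have habs : |(A * B) i₁ j - (A * B) i₂ j| ≤ S * ergDelta B := by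
    rw [hdiff]; exact abs_le.mpr ⟨by linarith, h1⟩
  exact habs.trans (mul_le_mul_of_nonneg_right hSlam hδB)

end aux

/-- Hajnal's inequality: for row stochastic matrices `Q(1), …, Q(p)` (p ≥ 1),
`δ(Q(1)·Q(2)·⋯·Q(p)) ≤ ∏_{i=1}^p λ(Q(i))`. -/
theorem ergDelta_prod_le_prod_ergLambda {M p : ℕ} (hM : 0 < M) (hp : 1 ≤ p)
    (Q : Fin p → Matrix (Fin M) (Fin M) ℝ) (hQ : ∀ i, RowStochastic (Q i)) :
    ergDelta (List.ofFn Q).prod ≤ ∏ i, ergLambda (Q i) := by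
  obtain ⟨n, rfl⟩ : ∃ n, p = n + 1 := ⟨p - 1, (Nat.succ_pred_eq_of_pos hp).symm⟩
  clear hp
  induction n with
  | zero =>
      simp only [List.ofFn_succ, List.ofFn_zero, List.prod_cons, List.prod_nil, mul_one]
      simpa using ergDelta_le_ergLambda hM (hQ 0)
  | succ n ih =>
      rw [List.ofFn_succ, List.prod_cons, Fin.prod_univ_succ]
      have hrest := ih (fun i => Q i.succ) (fun i => hQ i.succ)
      calc ergDelta (Q 0 * (List.ofFn fun i => Q i.succ).prod)
          ≤ ergLambda (Q 0) * ergDelta (List.ofFn fun i => Q i.succ).prod :=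
            ergDelta_mul_le hM _ (hQ 0)
        _ ≤ ergLambda (Q 0) * ∏ i : Fin (n + 1), ergLambda (Q i.succ) :=
            mul_le_mul_of_nonneg_left hrest (ergLambda_nonneg hM (hQ 0))
end

section
/- Let 𝒯 be a finite set of τ ≥ 1 matrices, each an M×M real matrix with all entries nonnegative and all diagonal entries positive, and such that for every H ∈ 𝒯 the power H^M has some column with all entries positive. Then for every sequence H(1), …, H(τM) of τM matrices drawn from 𝒯 (repetitions allowed, in any order), the product H(τM)·H(τM−1)·⋯·H(1) has some column with all entries positive. -/
section Aux

variable {M : ℕ}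

def MNonneg (A : Matrix (Fin M) (Fin M) ℝ) : Prop := ∀ i j, (0:ℝ) ≤ A i j
def MPosDiag (A : Matrix (Fin M) (Fin M) ℝ) : Prop := ∀ i, (0:ℝ) < A i i

lemma mnonneg_one : MNonneg (1 : Matrix (Fin M) (Fin M) ℝ) := by
  intro i j
  by_cases h : i = j <;> simp [Matrix.one_apply, h]

lemma mnonneg_mul {A B : Matrix (Fin M) (Fin M) ℝ} (hA : MNonneg A) (hB : MNonneg B) :
    MNonneg (A * B) := by
  intro i j
  rw [Matrix.mul_apply]
  exact Finset.sum_nonneg fun k _ => mul_nonneg (hA i k) (hB k j)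

lemma mnonneg_pow {A : Matrix (Fin M) (Fin M) ℝ} (hA : MNonneg A) (n : ℕ) :
    MNonneg (A ^ n) := by
  induction n with
  | zero => simpa using mnonneg_one
  | succ n ih => rw [pow_succ]; exact mnonneg_mul ih hA

lemma mnonneg_prod {L : List (Matrix (Fin M) (Fin M) ℝ)}
    (h : ∀ A ∈ L, MNonneg A) : MNonneg L.prod := by
  induction L with
  | nil => simpa using mnonneg_one
  | cons A L ih =>
      rw [List.prod_cons]
      exact mnonneg_mul (h A (List.mem_cons_self)) (ih fun B hB => h B (List.mem_cons_of_mem _ hB))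

lemma mposdiag_prod {L : List (Matrix (Fin M) (Fin M) ℝ)}
    (h : ∀ A ∈ L, MNonneg A ∧ MPosDiag A) : MPosDiag L.prod := by
  induction L with
  | nil => intro i; simp [Matrix.one_apply]
  | cons A L ih =>
      intro i
      rw [List.prod_cons, Matrix.mul_apply]
      have hprod := ih fun B hB => h B (List.mem_cons_of_mem _ hB)
      have hnnL := mnonneg_prod (L := L) fun B hB => (h B (List.mem_cons_of_mem _ hB)).1
      refine Finset.sum_pos' (fun k _ => mul_nonneg ((h A (List.mem_cons_self)).1 i k) (hnnL k i)) ⟨i, Finset.mem_univ i, ?_⟩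
      exact mul_pos ((h A (List.mem_cons_self)).2 i) (hprod i)

lemma mposdiag_pow {A : Matrix (Fin M) (Fin M) ℝ} (hA : MNonneg A) (hd : MPosDiag A) (n : ℕ) :
    MPosDiag (A ^ n) := by
  have : A ^ n = (List.replicate n A).prod := by simp [List.prod_replicate]
  rw [this]
  exact mposdiag_prod fun B hB => by rw [List.eq_of_mem_replicate hB]; exact ⟨hA, hd⟩

/-- Positivity extraction from a positive sum of nonnegative terms in mul_apply. -/
lemma exists_pos_of_mul_apply_pos {A B : Matrix (Fin M) (Fin M) ℝ}
    (hA : MNonneg A) (hB : MNonneg B) {j i : Fin M} (h : 0 < (A * B) j i) :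
    ∃ k, 0 < A j k ∧ 0 < B k i := by
  rw [Matrix.mul_apply] at h
  by_contra hc
  push_neg at hc
  have : ∑ k, A j k * B k i ≤ 0 := by
    apply Finset.sum_nonpos
    intro k _
    rcases lt_or_ge 0 (A j k) with hp | hp
    · have := hc k hp
      have hB0 : B k i = 0 := le_antisymm this (hB k i)
      simp [hB0]
    · have hA0 : A j k = 0 := le_antisymm hp (hA j k)
      simp [hA0]
  linarith

/-- Key lemma: the product of a list of nonneg pos-diag matrices dominates
the positivity pattern of `H ^ (count H L)`. -/
lemma key {H : Matrix (Fin M) (Fin M) ℝ} (hH : MNonneg H)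
    (L : List (Matrix (Fin M) (Fin M) ℝ))
    (hall : ∀ A ∈ L, MNonneg A ∧ MPosDiag A) :
    ∀ j i, 0 < (H ^ (L.count H)) j i → 0 < L.prod j i := by
  induction L with
  | nil => intro j i h; simpa using h
  | cons A L ih =>
      intro j i h
      have hA := hall A (List.mem_cons_self)
      have htail : ∀ B ∈ L, MNonneg B ∧ MPosDiag B :=
        fun B hB => hall B (List.mem_cons_of_mem _ hB)
      have hnnL : MNonneg L.prod := mnonneg_prod fun B hB => (htail B hB).1
      rw [List.prod_cons]
      by_cases hAH : A = H
      · subst hAH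
        rw [List.count_cons_self, pow_succ'] at h
        obtain ⟨k, hk1, hk2⟩ := exists_pos_of_mul_apply_pos hH (mnonneg_pow hH _) h
        rw [Matrix.mul_apply]
        refine Finset.sum_pos' (fun m _ => mul_nonneg (hA.1 j m) (hnnL m i)) ⟨k, Finset.mem_univ k, ?_⟩
        exact mul_pos hk1 (ih htail k i hk2)
      · rw [List.count_cons_of_ne (Ne.symm ?_)] at h
        · rw [Matrix.mul_apply]
          refine Finset.sum_pos' (fun m _ => mul_nonneg (hA.1 j m) (hnnL m i)) ⟨j, Finset.mem_univ j, ?_⟩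
          exact mul_pos (hA.2 j) (ih htail j i h)
        · exact Ne.symm hAH

end Aux

/-- Let `𝒯` be a finite set of `τ ≥ 1` matrices, each `M×M` with nonnegative entries
and positive diagonal entries, and such that for every `H ∈ 𝒯` the power `H^M` has
a column with all entries positive. Then for every sequence of `τ·M` matrices drawn
from `𝒯` (repetitions allowed, in any order), the backward product
`H(τM)·H(τM−1)·⋯·H(1)` has some column with all entries positive. -/
theorem prod_has_positive_column {M τ : ℕ} (hM : 0 < M) (hτ : 1 ≤ τ)
    (T : Finset (Matrix (Fin M) (Fin M) ℝ)) (hcard : T.card = τ)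
    (hnn : ∀ H ∈ T, ∀ i j, (0:ℝ) ≤ H i j)
    (hdiag : ∀ H ∈ T, ∀ i, (0:ℝ) < H i i)
    (hcol : ∀ H ∈ T, ∃ i, ∀ j, (0:ℝ) < (H ^ M) j i)
    (Hs : Fin (τ * M) → Matrix (Fin M) (Fin M) ℝ) (hmem : ∀ t, Hs t ∈ T) :
    ∃ i, ∀ j, (0:ℝ) < ((List.ofFn Hs).reverse.prod) j i := by
  set L := (List.ofFn Hs).reverse with hL
  have hlen : L.length = τ * M := by simp [hL]
  have hmemL : ∀ A ∈ L, A ∈ T := by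
    intro A hA
    rw [hL, List.mem_reverse, List.mem_ofFn] at hA
    obtain ⟨t, rfl⟩ := hA
    exact hmem t
  have hall : ∀ A ∈ L, MNonneg A ∧ MPosDiag A :=
    fun A hA => ⟨hnn A (hmemL A hA), hdiag A (hmemL A hA)⟩
  -- pigeonhole: some H ∈ T has count ≥ M in L
  obtain ⟨H, hHT, hHcount⟩ : ∃ H ∈ T, M ≤ L.count H := by
    by_contra hc
    push_neg at hc
    have hsub : L.toFinset ⊆ T := fun A hA => hmemL A (List.mem_toFinset.mp hA)
    have h1 : L.length = ∑ a ∈ L.toFinset, L.count a := by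
      simpa using (Multiset.toFinset_sum_count_eq (L : Multiset _)).symm
    have h2 : ∑ a ∈ L.toFinset, L.count a ≤ ∑ a ∈ T, L.count a :=
      Finset.sum_le_sum_of_subset hsub
    have h3 : ∑ a ∈ T, L.count a < ∑ a ∈ T, M := by
      apply Finset.sum_lt_sum_of_nonempty
      · rw [← Finset.card_pos, hcard]; exact hτ
      · exact fun a ha => hc a ha
    have h4 : ∑ a ∈ T, M = τ * M := by rw [Finset.sum_const, hcard, smul_eq_mul]
    omega
  have hHnn := hnn H hHT
  obtain ⟨i, hi⟩ := hcol H hHT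
  refine ⟨i, fun j => ?_⟩
  apply key hHnn L hall
  -- H ^ count ≥ pattern of H ^ M: count = M + r
  obtain ⟨r, hr⟩ := Nat.exists_eq_add_of_le hHcount
  rw [hr, add_comm, pow_add]
  have hposd := mposdiag_pow hHnn (hdiag H hHT) r
  rw [Matrix.mul_apply]
  refine Finset.sum_pos' (fun m _ => mul_nonneg (mnonneg_pow hHnn r j m) (mnonneg_pow hHnn M m i)) ⟨j, Finset.mem_univ j, ?_⟩
  exact mul_pos (hposd j) (hi j)
end

section
/- Let β ∈ (0,1], let Y(1), …, Y(p) be row stochastic M×M real matrices, and let H(1), …, H(p) be M×M matrices with entries in {0,1} such that β·H(t) ≤ Y(t) entrywise for every t. If the product H(p)·H(p−1)·⋯·H(1) has a column all of whose entries are at least 1, then the row stochastic matrix Q := Y(p)·Y(p−1)·⋯·Y(1) satisfies λ(Q) ≤ 1 − β^p; in particular Q is a scrambling matrix. -/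
lemma prod_dom_aux {M : ℕ} (β : ℝ) (hβ0 : 0 ≤ β)
    (YL HL : List (Matrix (Fin M) (Fin M) ℝ))
    (h : List.Forall₂ (fun Yt Ht =>
        (∀ i j, 0 ≤ Ht i j) ∧ (∀ i j, β * Ht i j ≤ Yt i j)) YL HL) :
    (∀ i j, 0 ≤ HL.prod i j) ∧
    (∀ i j, β ^ YL.length * HL.prod i j ≤ YL.prod i j) := by
  induction h with
  | nil =>
      refine ⟨fun i j => ?_, fun i j => ?_⟩ <;>
        simp [Matrix.one_apply] <;> split <;> norm_num
  | @cons Yt Ht Ys Hs hp ht ih =>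
      obtain ⟨hH, hYH⟩ := hp
      have hYnn : ∀ i j, 0 ≤ Yt i j := fun i j =>
        le_trans (mul_nonneg hβ0 (hH i j)) (hYH i j)
      refine ⟨fun i j => ?_, fun i j => ?_⟩
      · rw [List.prod_cons, Matrix.mul_apply]
        exact Finset.sum_nonneg fun k _ => mul_nonneg (hH i k) (ih.1 k j)
      · rw [List.prod_cons, List.prod_cons, Matrix.mul_apply, Matrix.mul_apply,
          List.length_cons, Finset.mul_sum]
        calc ∑ k, β ^ (Ys.length + 1) * (Ht i k * Hs.prod k j)
            = ∑ k, (β * Ht i k) * (β ^ Ys.length * Hs.prod k j) := by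
              refine Finset.sum_congr rfl fun k _ => ?_; ring
          _ ≤ ∑ k, Yt i k * Ys.prod k j := by
              refine Finset.sum_le_sum fun k _ => ?_
              exact mul_le_mul (hYH i k) (ih.2 k j)
                (mul_nonneg (pow_nonneg hβ0 _) (ih.1 k j)) (hYnn i k)

lemma prod_nonneg_aux {M : ℕ} (YL : List (Matrix (Fin M) (Fin M) ℝ))
    (h : ∀ A ∈ YL, ∀ i j, 0 ≤ A i j) : ∀ i j, 0 ≤ YL.prod i j := by
  induction YL with
  | nil => intro i j; simp [Matrix.one_apply]; split <;> norm_num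
  | cons A l ih =>
      intro i j
      rw [List.prod_cons, Matrix.mul_apply]
      exact Finset.sum_nonneg fun k _ => mul_nonneg
        (h A List.mem_cons_self i k) (ih (fun B hB => h B (List.mem_cons_of_mem _ hB)) k j)


/-- Let `β ∈ (0,1]`, let `Y(1), …, Y(p)` be row stochastic matrices and
`H(1), …, H(p)` be `{0,1}`-matrices with `β·H(t) ≤ Y(t)` entrywise. If the backward
product `H(p)·⋯·H(1)` has a column all of whose entries are at least `1`, then the
backward product `Q := Y(p)·⋯·Y(1)` satisfies `λ(Q) ≤ 1 − β^p`; in particular `Q`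
is scrambling (`λ(Q) < 1`). -/
theorem ergLambda_prod_le_of_dominating {M p : ℕ} (hM : 0 < M) (hp : 1 ≤ p)
    (β : ℝ) (hβ0 : 0 < β) (hβ1 : β ≤ 1)
    (Y H : Fin p → Matrix (Fin M) (Fin M) ℝ)
    (hY : ∀ t, RowStochastic (Y t))
    (hH01 : ∀ t i j, H t i j = 0 ∨ H t i j = 1)
    (hle : ∀ t i j, β * H t i j ≤ Y t i j)
    (i₀ : Fin M) (hcol : ∀ j, (1:ℝ) ≤ ((List.ofFn H).reverse.prod) j i₀) :
    ergLambda ((List.ofFn Y).reverse.prod) ≤ 1 - β ^ p ∧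
      ergLambda ((List.ofFn Y).reverse.prod) < 1 := by
  haveI : Nonempty (Fin M) := ⟨⟨0, hM⟩⟩
  set Q := (List.ofFn Y).reverse.prod with hQdef
  have hforall : List.Forall₂ (fun Yt Ht =>
      (∀ i j, 0 ≤ Ht i j) ∧ (∀ i j, β * Ht i j ≤ Yt i j))
      (List.ofFn Y).reverse (List.ofFn H).reverse := by
    apply List.rel_reverse
    rw [List.forall₂_iff_get]
    refine ⟨by simp, fun i h₁ h₂ => ?_⟩
    simp only [List.get_ofFn]
    constructor
    · intro a b
      rcases hH01 _ a b with h | h <;> rw [h] <;> norm_num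
    · intro a b; exact hle _ a b
  obtain ⟨hHnn, hdom⟩ := prod_dom_aux β hβ0.le _ _ hforall
  have hlen : ((List.ofFn Y).reverse).length = p := by simp
  have hQentry : ∀ j, β ^ p ≤ Q j i₀ := by
    intro j
    calc β ^ p = β ^ p * 1 := by ring
      _ ≤ β ^ p * (List.ofFn H).reverse.prod j i₀ :=
          mul_le_mul_of_nonneg_left (hcol j) (pow_nonneg hβ0.le _)
      _ ≤ Q j i₀ := by rw [hQdef]; have := hdom j i₀; rwa [hlen] at this
  have hQnn : ∀ i j, 0 ≤ Q i j := by
    apply prod_nonneg_aux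
    intro A hA
    rw [List.mem_reverse, List.mem_ofFn] at hA
    obtain ⟨t, rfl⟩ := hA
    exact (hY t).1
  have hsum : ∀ i₁ i₂ : Fin M, β ^ p ≤ ∑ j, min (Q i₁ j) (Q i₂ j) := by
    intro i₁ i₂
    calc β ^ p ≤ min (Q i₁ i₀) (Q i₂ i₀) := le_min (hQentry i₁) (hQentry i₂)
      _ ≤ ∑ j, min (Q i₁ j) (Q i₂ j) :=
        Finset.single_le_sum (fun j _ => le_min (hQnn i₁ j) (hQnn i₂ j))
          (Finset.mem_univ i₀)
  have hinf : β ^ p ≤ ⨅ i₁, ⨅ i₂, ∑ j, min (Q i₁ j) (Q i₂ j) :=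
    le_ciInf fun i₁ => le_ciInf fun i₂ => hsum i₁ i₂
  have h1 : ergLambda Q ≤ 1 - β ^ p := by
    rw [ergLambda]; linarith
  exact ⟨h1, lt_of_le_of_lt h1 (by nlinarith [pow_pos hβ0 p])⟩
end

section
/- Let g : ℝ^d → ℝ be differentiable, μ-strongly convex and have L-Lipschitz gradient, where 0 < μ ≤ L. Then for all x, y ∈ ℝ^d: ⟨∇g(x) − ∇g(y), x − y⟩ ≥ (μL/(μ+L))·‖x − y‖² + (1/(μ+L))·‖∇g(x) − ∇g(y)‖². -/
open scoped RealInnerProductSpace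

section Aux

variable {E : Type*} [NormedAddCommGroup E] [InnerProductSpace ℝ E] [CompleteSpace E]

lemma myHasDerivAt_line (f : E → ℝ) (hf : Differentiable ℝ f) (x v : E) (t : ℝ) :
    HasDerivAt (fun t : ℝ => f (x + t • v)) ⟪gradient f (x + t • v), v⟫ t := by
  have hc : HasDerivAt (fun t : ℝ => x + t • v) v t := by
    simpa using ((hasDerivAt_id t).smul_const v).const_add x
  have hg := (hf (x + t • v)).hasGradientAt.hasFDerivAt
  have h2 := hg.comp_hasDerivAt t hc
  exact h2.congr_deriv (by simp [InnerProductSpace.toDual_apply_apply])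

lemma myDescent (f : E → ℝ) (hf : Differentiable ℝ f) (C : ℝ)
    (hlip : ∀ x y, ‖gradient f x - gradient f y‖ ≤ C * ‖x - y‖) (x y : E) :
    f y ≤ f x + ⟪gradient f x, y - x⟫ + C / 2 * ‖y - x‖ ^ 2 := by
  set v := y - x with hv
  set ψ : ℝ → ℝ :=
    fun t => f (x + t • v) - t * ⟪gradient f x, v⟫ - C / 2 * t ^ 2 * ‖v‖ ^ 2 with hψ
  have hd : ∀ t : ℝ, HasDerivAt ψ
      (⟪gradient f (x + t • v) - gradient f x, v⟫ - C * t * ‖v‖ ^ 2) t := by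
    intro t
    have h1 := myHasDerivAt_line f hf x v t
    have h2 : HasDerivAt (fun t : ℝ => t * ⟪gradient f x, v⟫) ⟪gradient f x, v⟫ t := by
      simpa using (hasDerivAt_id t).mul_const (⟪gradient f x, v⟫)
    have h3 : HasDerivAt (fun t : ℝ => C / 2 * t ^ 2 * ‖v‖ ^ 2) (C * t * ‖v‖ ^ 2) t := by
      have h4 : HasDerivAt (fun t : ℝ => t ^ 2) (2 * t) t := by
        simpa using hasDerivAt_pow 2 t
      have h5 := (h4.const_mul (C / 2)).mul_const (‖v‖ ^ 2)
      exact h5.congr_deriv (by ring)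
    have h6 := (h1.sub h2).sub h3
    have e : (⟪gradient f (x + t • v), v⟫ - ⟪gradient f x, v⟫) - C * t * ‖v‖ ^ 2 =
        ⟪gradient f (x + t • v) - gradient f x, v⟫ - C * t * ‖v‖ ^ 2 := by
      rw [inner_sub_left]
    rwa [e] at h6
  have hmono : AntitoneOn ψ (Set.Icc 0 1) := by
    apply antitoneOn_of_deriv_nonpos (convex_Icc 0 1)
    · exact fun t _ => ((hd t).differentiableAt.continuousAt).continuousWithinAt
    · exact fun t _ => (hd t).differentiableAt.differentiableWithinAt
    · intro t ht
      rw [interior_Icc] at ht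
      rw [(hd t).deriv]
      have h4 : ⟪gradient f (x + t • v) - gradient f x, v⟫ ≤ C * t * ‖v‖ ^ 2 := by
        calc ⟪gradient f (x + t • v) - gradient f x, v⟫
            ≤ ‖gradient f (x + t • v) - gradient f x‖ * ‖v‖ := real_inner_le_norm _ _
          _ ≤ (C * ‖(x + t • v) - x‖) * ‖v‖ :=
              mul_le_mul_of_nonneg_right (hlip _ _) (norm_nonneg v)
          _ = C * t * ‖v‖ ^ 2 := by
              rw [show x + t • v - x = t • v by abel, norm_smul]
              rw [Real.norm_eq_abs, abs_of_pos ht.1]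
              ring
      linarith
  have h7 := hmono (Set.left_mem_Icc.2 zero_le_one) (Set.right_mem_Icc.2 zero_le_one)
    zero_le_one
  have h8 : ψ 1 = f y - ⟪gradient f x, v⟫ - C / 2 * ‖v‖ ^ 2 := by
    have hxy : x + v = y := by rw [hv]; abel
    simp [hψ, hxy]
  have h9 : ψ 0 = f x := by simp [hψ]
  rw [h8, h9] at h7
  linarith

lemma myStrongFirstOrder (f : E → ℝ) (hf : Differentiable ℝ f) (μ : ℝ)
    (hsc : ConvexOn ℝ Set.univ (fun x => f x - μ / 2 * ‖x‖ ^ 2)) (x y : E) :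
    f x + ⟪gradient f x, y - x⟫ + μ / 2 * ‖y - x‖ ^ 2 ≤ f y := by
  set v := y - x with hv
  set φ : ℝ → ℝ := fun t => f (x + t • v) - μ / 2 * ‖x + t • v‖ ^ 2 with hφ
  have key : ∀ t : ℝ, (1 - t) • x + t • y = x + t • v := by
    intro t
    rw [hv, smul_sub, sub_smul, one_smul]
    abel
  have hconv : ConvexOn ℝ Set.univ φ := by
    have h1 := hsc.comp_affineMap (AffineMap.lineMap (x : E) y)
    have h2 : ((fun z => f z - μ / 2 * ‖z‖ ^ 2) ∘ ⇑(AffineMap.lineMap (x : E) y)) = φ := by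
      funext t
      simp only [Function.comp_apply, AffineMap.lineMap_apply_module, key t, hφ]
    rw [Set.preimage_univ, h2] at h1
    exact h1
  have hφ0 : HasDerivAt φ (⟪gradient f x, v⟫ - μ * ⟪x, v⟫) 0 := by
    have h1 : HasDerivAt (fun t : ℝ => f (x + t • v)) ⟪gradient f x, v⟫ 0 := by
      simpa using myHasDerivAt_line f hf x v 0
    have hc : HasDerivAt (fun t : ℝ => x + t • v) v 0 := by
      simpa using ((hasDerivAt_id (0 : ℝ)).smul_const v).const_add x
    have h2 : HasDerivAt (fun t : ℝ => ‖x + t • v‖ ^ 2) (2 * ⟪x, v⟫) 0 := by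
      have h3 := hc.inner ℝ hc
      have heq : (fun t : ℝ => (inner ℝ (x + t • v) (x + t • v) : ℝ)) =
          fun t : ℝ => ‖x + t • v‖ ^ 2 := by
        funext t
        exact real_inner_self_eq_norm_sq _
      rw [heq] at h3
      exact h3.congr_deriv (by simp [real_inner_comm]; ring)
    have h4 := h1.sub (h2.const_mul (μ / 2))
    exact h4.congr_deriv (by ring)
  have hs := hconv.le_slope_of_hasDerivAt (Set.mem_univ (0 : ℝ)) (Set.mem_univ (1 : ℝ))
    zero_lt_one hφ0
  rw [slope_def_field] at hs
  have h10 : φ 1 = f y - μ / 2 * ‖y‖ ^ 2 := by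
    have hxy : x + v = y := by rw [hv]; abel
    simp [hφ, hxy]
  have h11 : φ 0 = f x - μ / 2 * ‖x‖ ^ 2 := by simp [hφ]
  rw [h10, h11] at hs
  simp only [sub_zero, div_one] at hs
  have hexp : ‖y‖ ^ 2 = ‖x‖ ^ 2 + 2 * ⟪x, v⟫ + ‖v‖ ^ 2 := by
    have h12 := norm_add_sq_real x v
    rw [show x + v = y by rw [hv]; abel] at h12
    exact h12
  have hexp2 : μ / 2 * ‖y‖ ^ 2 = μ / 2 * ‖x‖ ^ 2 + μ * ⟪x, v⟫ + μ / 2 * ‖v‖ ^ 2 := by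
    rw [hexp]; ring
  linarith

lemma myCocoercive (f : E → ℝ) (G : E → E) (C : ℝ) (hC : 0 < C)
    (hA : ∀ x y, f x + ⟪G x, y - x⟫ ≤ f y)
    (hB : ∀ x y, f y ≤ f x + ⟪G x, y - x⟫ + C / 2 * ‖y - x‖ ^ 2) (x y : E) :
    1 / C * ‖G x - G y‖ ^ 2 ≤ ⟪G x - G y, x - y⟫ := by
  have key : ∀ a b : E, f a + ⟪G a, b - a⟫ + 1 / (2 * C) * ‖G b - G a‖ ^ 2 ≤ f b := by
    intro a b
    set w := G b - G a with hw
    set z := b - (1 / C) • w with hz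
    have h1 := hA a z
    have h2 := hB b z
    have hz1 : z - b = -((1 / C) • w) := by rw [hz]; abel
    have hz2 : z - a = (b - a) - (1 / C) • w := by rw [hz]; abel
    rw [hz2, inner_sub_right, real_inner_smul_right] at h1
    rw [hz1, inner_neg_right, real_inner_smul_right] at h2
    have hn : ‖-((1 / C) • w)‖ ^ 2 = (1 / C) ^ 2 * ‖w‖ ^ 2 := by
      rw [norm_neg, norm_smul, Real.norm_eq_abs,
        abs_of_pos (by positivity : (0 : ℝ) < 1 / C)]
      ring
    rw [hn] at h2
    have h3 := le_trans h1 h2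
    have h4 : 1 / C * ⟪G b, w⟫ - 1 / C * ⟪G a, w⟫ = 1 / C * ‖w‖ ^ 2 := by
      rw [← mul_sub, ← inner_sub_left, ← hw, real_inner_self_eq_norm_sq]
    have h5 : C / 2 * ((1 / C) ^ 2 * ‖w‖ ^ 2) = 1 / (2 * C) * ‖w‖ ^ 2 := by
      field_simp <;> ring
    have h6 : 1 / C * ‖w‖ ^ 2 - 1 / (2 * C) * ‖w‖ ^ 2 = 1 / (2 * C) * ‖w‖ ^ 2 := by
      field_simp <;> ring
    linarith
  have k1 := key x y
  have k2 := key y x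
  rw [show G x - G y = -(G y - G x) by abel, norm_neg] at *
  have e1 : ⟪-(G y - G x), x - y⟫ + ⟪G x, y - x⟫ + ⟪G y, x - y⟫ = 0 := by
    rw [inner_neg_left, inner_sub_left, show (x : E) - y = -(y - x) by abel, inner_neg_right,
      inner_neg_right]
    ring
  have h7 : 1 / (2 * C) * ‖G y - G x‖ ^ 2 + 1 / (2 * C) * ‖G y - G x‖ ^ 2 =
      1 / C * ‖G y - G x‖ ^ 2 := by
    field_simp <;> ring
  linarith [k1, k2, e1, h7]
end Aux

/-- Coercivity of strongly convex smooth functions: if `g : ℝ^d → ℝ` is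
differentiable, `μ`-strongly convex (i.e. `x ↦ g(x) − (μ/2)‖x‖²` is convex) and has
`L`-Lipschitz gradient with `0 < μ ≤ L`, then for all `x, y`:
`⟨∇g(x) − ∇g(y), x − y⟩ ≥ (μL/(μ+L))‖x − y‖² + (1/(μ+L))‖∇g(x) − ∇g(y)‖²`. -/
theorem strongConvex_gradient_coercivity {d : ℕ} (μ L : ℝ) (hμ : 0 < μ) (hμL : μ ≤ L)
    (g : EuclideanSpace ℝ (Fin d) → ℝ)
    (hdiff : Differentiable ℝ g)
    (hsc : ConvexOn ℝ Set.univ (fun x => g x - μ / 2 * ‖x‖ ^ 2))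
    (hlip : ∀ x y, ‖gradient g x - gradient g y‖ ≤ L * ‖x - y‖) :
    ∀ x y : EuclideanSpace ℝ (Fin d),
      μ * L / (μ + L) * ‖x - y‖ ^ 2 + 1 / (μ + L) * ‖gradient g x - gradient g y‖ ^ 2 ≤
        ⟪gradient g x - gradient g y, x - y⟫ := by
  intro x y
  have hμL0 : (0 : ℝ) < μ + L := by linarith
  have hmono : ∀ a b : EuclideanSpace ℝ (Fin d),
      μ * ‖a - b‖ ^ 2 ≤ ⟪gradient g a - gradient g b, a - b⟫ := by
    intro a b
    have h1 := myStrongFirstOrder g hdiff μ hsc a b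
    have h2 := myStrongFirstOrder g hdiff μ hsc b a
    have e1 : ⟪gradient g a - gradient g b, a - b⟫ =
        -⟪gradient g a, b - a⟫ - ⟪gradient g b, a - b⟫ := by
      rw [inner_sub_left, show (a : EuclideanSpace ℝ (Fin d)) - b = -(b - a) by abel,
        inner_neg_right]
    have e2 : ‖b - a‖ = ‖a - b‖ := norm_sub_rev _ _
    rw [e2] at h1
    rw [e1]
    linarith
  rcases eq_or_lt_of_le hμL with heq | hlt
  · subst heq
    have h1 := hmono x y
    have h2 := hlip x y
    have h3 : ‖gradient g x - gradient g y‖ ^ 2 ≤ μ ^ 2 * ‖x - y‖ ^ 2 := by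
      nlinarith [norm_nonneg (gradient g x - gradient g y), norm_nonneg (x - y)]
    have k1 : μ * μ / (μ + μ) = μ / 2 := by
      rw [div_eq_iff (ne_of_gt (by linarith : (0:ℝ) < μ + μ))]
      ring
    have k2 : (1 : ℝ) / (μ + μ) = 1 / (2 * μ) := by rw [two_mul]
    rw [k1, k2]
    have h4 : 1 / (2 * μ) * ‖gradient g x - gradient g y‖ ^ 2 ≤ μ / 2 * ‖x - y‖ ^ 2 := by
      have h5 := mul_le_mul_of_nonneg_left h3
        (le_of_lt (by positivity : (0 : ℝ) < 1 / (2 * μ)))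
      have h6 : 1 / (2 * μ) * (μ ^ 2 * ‖x - y‖ ^ 2) = μ / 2 * ‖x - y‖ ^ 2 := by
        rw [div_mul_eq_mul_div, div_mul_eq_mul_div, one_mul,
          div_eq_div_iff (ne_of_gt (by linarith : (0:ℝ) < 2 * μ)) (two_ne_zero)]
        ring
      linarith
    linarith
  · have hC : (0 : ℝ) < L - μ := by linarith
    have hA : ∀ a b : EuclideanSpace ℝ (Fin d),
        (g a - μ / 2 * ‖a‖ ^ 2) + ⟪gradient g a - μ • a, b - a⟫ ≤ g b - μ / 2 * ‖b‖ ^ 2 := by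
      intro a b
      have h1 := myStrongFirstOrder g hdiff μ hsc a b
      have hexp : ‖b‖ ^ 2 = ‖a‖ ^ 2 + 2 * ⟪a, b - a⟫ + ‖b - a‖ ^ 2 := by
        have h2 := norm_add_sq_real a (b - a)
        rw [show a + (b - a) = b by abel] at h2
        exact h2
      have hexp2 : μ / 2 * ‖b‖ ^ 2 =
          μ / 2 * ‖a‖ ^ 2 + μ * ⟪a, b - a⟫ + μ / 2 * ‖b - a‖ ^ 2 := by
        rw [hexp]; ring
      rw [inner_sub_left, real_inner_smul_left]
      linarith
    have hB : ∀ a b : EuclideanSpace ℝ (Fin d),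
        g b - μ / 2 * ‖b‖ ^ 2 ≤ (g a - μ / 2 * ‖a‖ ^ 2) + ⟪gradient g a - μ • a, b - a⟫ +
          (L - μ) / 2 * ‖b - a‖ ^ 2 := by
      intro a b
      have h1 := myDescent g hdiff L hlip a b
      have hexp : ‖b‖ ^ 2 = ‖a‖ ^ 2 + 2 * ⟪a, b - a⟫ + ‖b - a‖ ^ 2 := by
        have h2 := norm_add_sq_real a (b - a)
        rw [show a + (b - a) = b by abel] at h2
        exact h2
      have hexp2 : μ / 2 * ‖b‖ ^ 2 =
          μ / 2 * ‖a‖ ^ 2 + μ * ⟪a, b - a⟫ + μ / 2 * ‖b - a‖ ^ 2 := by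
        rw [hexp]; ring
      rw [inner_sub_left, real_inner_smul_left]
      linarith
    have hco := myCocoercive (fun z => g z - μ / 2 * ‖z‖ ^ 2)
      (fun z => gradient g z - μ • z) (L - μ) hC hA hB x y
    have hGxy : (gradient g x - μ • x) - (gradient g y - μ • y) =
        (gradient g x - gradient g y) - μ • (x - y) := by
      rw [smul_sub]; abel
    rw [hGxy] at hco
    have e1 : ⟪(gradient g x - gradient g y) - μ • (x - y), x - y⟫ =
        ⟪gradient g x - gradient g y, x - y⟫ - μ * ‖x - y‖ ^ 2 := by
      rw [inner_sub_left, real_inner_smul_left, real_inner_self_eq_norm_sq]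
    have e2 : ‖(gradient g x - gradient g y) - μ • (x - y)‖ ^ 2 =
        ‖gradient g x - gradient g y‖ ^ 2 -
          2 * μ * ⟪gradient g x - gradient g y, x - y⟫ + μ ^ 2 * ‖x - y‖ ^ 2 := by
      rw [norm_sub_sq_real, real_inner_smul_right, norm_smul, Real.norm_eq_abs,
        abs_of_pos hμ]
      ring
    rw [e1, e2] at hco
    have hco' : ‖gradient g x - gradient g y‖ ^ 2 -
        2 * μ * ⟪gradient g x - gradient g y, x - y⟫ + μ ^ 2 * ‖x - y‖ ^ 2 ≤
        (L - μ) * (⟪gradient g x - gradient g y, x - y⟫ - μ * ‖x - y‖ ^ 2) := by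
      have h5 := mul_le_mul_of_nonneg_left hco (le_of_lt hC)
      rw [← mul_assoc, mul_one_div, div_self (ne_of_gt hC), one_mul] at h5
      exact h5
    have hgoal : μ * L / (μ + L) * ‖x - y‖ ^ 2 +
        1 / (μ + L) * ‖gradient g x - gradient g y‖ ^ 2 =
        (μ * L * ‖x - y‖ ^ 2 + ‖gradient g x - gradient g y‖ ^ 2) / (μ + L) := by
      ring
    rw [hgoal, div_le_iff₀ hμL0]
    nlinarith [hco']
end

section
/- Let f : ℝ^d → ℝ be differentiable, μ-strongly convex and have L-Lipschitz gradient with 0 < μ ≤ L, and let the step size h satisfy 0 < h ≤ 2/(μ+L). Then for all x, y ∈ ℝ^d: ‖(x − h∇f(x)) − (y − h∇f(y))‖ ≤ (1 − μh)·‖x − y‖. In particular, if w* is the global minimizer of f, then ‖x − h∇f(x) − w*‖ ≤ (1 − μh)·‖x − w*‖ for every x. -/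
open InnerProductSpace Set
open scoped RealInnerProductSpace

variable {E : Type*} [NormedAddCommGroup E] [InnerProductSpace ℝ E] [CompleteSpace E]

/-- derivative along a line -/
lemma lineDeriv' {g : E → ℝ} {G : E → E} (hg : ∀ z, HasGradientAt g (G z) z)
    (x v : E) (t : ℝ) :
    HasDerivAt (fun s : ℝ => g (x + s • v)) ⟪G (x + t • v), v⟫ t := by
  have h1 : HasDerivAt (fun s : ℝ => x + s • v) v t := by
    simpa using ((hasDerivAt_id t).smul_const v).const_add x
  have h2 := (hg (x + t • v)).hasFDerivAt
  have := h2.comp_hasDerivAt t h1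
  simp [InnerProductSpace.toDual_apply_apply] at this
  exact this

/-- first-order condition for convex functions -/
lemma firstOrder {g : E → ℝ} {G : E → E} (hg : ∀ z, HasGradientAt g (G z) z)
    (hc : ConvexOn ℝ univ g) (x y : E) :
    ⟪G x, y - x⟫ ≤ g y - g x := by
  set v := y - x
  have hφ : ConvexOn ℝ univ (fun t : ℝ => g (x + t • v)) := by
    have := hc.comp_affineMap (AffineMap.lineMap x y : ℝ →ᵃ[ℝ] E)
    have he : (fun t : ℝ => g (x + t • v)) = g ∘ (AffineMap.lineMap x y : ℝ →ᵃ[ℝ] E) := by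
      funext t
      simp [AffineMap.lineMap_apply, v]
      congr 1
      abel
    rw [he]
    simpa using this
  have hd := lineDeriv' hg x v
  have hderiv : deriv (fun s : ℝ => g (x + s • v)) 0 = ⟪G x, v⟫ := by
    simpa using (hd 0).deriv
  have := hφ.deriv_le_slope (mem_univ (0:ℝ)) (mem_univ (1:ℝ)) one_pos
    ((hd 0).differentiableAt)
  rw [hderiv] at this
  have hs : slope (fun s : ℝ => g (x + s • v)) 0 1 = g y - g x := by
    simp [slope_def_field, v]
  rw [hs] at this
  exact this

/-- convexity from monotone gradient -/
lemma convexOfMono {g : E → ℝ} {G : E → E} (hg : ∀ z, HasGradientAt g (G z) z)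
    (hmono : ∀ x y, 0 ≤ ⟪G x - G y, x - y⟫) : ConvexOn ℝ univ g := by
  refine ⟨convex_univ, fun x _ y _ a b ha hb hab => ?_⟩
  set v := y - x
  have hφ : ConvexOn ℝ univ (fun t : ℝ => g (x + t • v)) := by
    have hdiff : Differentiable ℝ (fun t : ℝ => g (x + t • v)) :=
      fun t => (lineDeriv' hg x v t).differentiableAt
    have hder : deriv (fun t : ℝ => g (x + t • v)) = fun t => ⟪G (x + t • v), v⟫ := by
      funext t; exact (lineDeriv' hg x v t).deriv
    refine Monotone.convexOn_univ_of_deriv hdiff ?_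
    rw [hder]
    intro s t hst
    rcases eq_or_lt_of_le hst with rfl | hlt
    · exact le_rfl
    · have := hmono (x + t • v) (x + s • v)
      have he : (x + t • v) - (x + s • v) = (t - s) • v := by
        rw [sub_smul]; abel
      rw [he, real_inner_smul_right] at this
      have h2 : 0 ≤ ⟪G (x + t • v) - G (x + s • v), v⟫ :=
        nonneg_of_mul_nonneg_right this (by linarith)
      rw [inner_sub_left] at h2
      simp only []
      linarith
  have := hφ.2 (mem_univ (0:ℝ)) (mem_univ (1:ℝ)) ha hb hab
  simp only [smul_eq_mul, mul_zero, mul_one, zero_add] at this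
  have he1 : x + b • v = a • x + b • y := by
    rw [show a = 1 - b by linarith]
    simp [v, smul_sub, sub_smul]
    abel
  rw [he1] at this
  simpa [v] using this

lemma hasGradSub {g1 g2 : E → ℝ} {G1 G2 : E} {z : E} (h1 : HasGradientAt g1 G1 z)
    (h2 : HasGradientAt g2 G2 z) : HasGradientAt (fun w => g1 w - g2 w) (G1 - G2) z := by
  have := (h1.hasFDerivAt.sub h2.hasFDerivAt).hasGradientAt
  simp at this
  exact this

lemma hasGradNormSq (c : ℝ) (z : E) :
    HasGradientAt (fun w : E => c * ‖w‖ ^ 2) ((2 * c) • z) z := by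
  have h1 : HasFDerivAt (fun w : E => c * ‖w‖ ^ 2)
      ((2 * c) • (InnerProductSpace.toDual ℝ E z : E →L[ℝ] ℝ)) z := by
    have hi : HasFDerivAt (fun w : E => ⟪w, w⟫)
        ((InnerProductSpace.toDual ℝ E z : E →L[ℝ] ℝ) + (InnerProductSpace.toDual ℝ E z)) z := by
      have := (hasFDerivAt_id z).inner ℝ (hasFDerivAt_id z)
      refine this.congr_fderiv ?_
      ext v
      simp [real_inner_comm]
    have := hi.const_mul c
    have e : (fun w : E => c * ‖w‖ ^ 2) = fun y => c * ⟪y, y⟫ := by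
      funext w
      rw [real_inner_self_eq_norm_sq]
    rw [e]
    refine this.congr_fderiv ?_
    · ext v
      simp
      ring
  have := h1.hasGradientAt
  convert this using 1
  rw [← map_smul]
  simp

lemma hasGradInner (a z : E) :
    HasGradientAt (fun w : E => ⟪a, w⟫) a z := by
  have : HasFDerivAt (fun w : E => ⟪a, w⟫) (InnerProductSpace.toDual ℝ E a : E →L[ℝ] ℝ) z :=
    (InnerProductSpace.toDual ℝ E a).hasFDerivAt
  simpa using this.hasGradientAt

lemma cocoercive {φ : E → ℝ} {Gφ : E → E} (hg : ∀ z, HasGradientAt φ (Gφ z) z)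
    (hconv : ConvexOn ℝ univ φ) {K : ℝ} (hK : 0 < K)
    (hdesc : ∀ y z, φ z ≤ φ y + ⟪Gφ y, z - y⟫ + K / 2 * ‖z - y‖ ^ 2) :
    ∀ x y, ‖Gφ x - Gφ y‖ ^ 2 ≤ K * ⟪Gφ x - Gφ y, x - y⟫ := by
  have monφ : ∀ a b, 0 ≤ ⟪Gφ a - Gφ b, a - b⟫ := by
    intro a b
    have h1 := firstOrder hg hconv a b
    have h2 := firstOrder hg hconv b a
    have ea : ⟪Gφ a, a - b⟫ = -⟪Gφ a, b - a⟫ := by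
      rw [← inner_neg_right]; congr 1; abel
    rw [inner_sub_left, ea]
    linarith
  have key : ∀ x y, φ x - ⟪Gφ x, x⟫ + ‖Gφ y - Gφ x‖ ^ 2 / (2 * K) ≤ φ y - ⟪Gφ x, y⟫ := by
    intro x y
    set F : E → ℝ := fun z => φ z - ⟪Gφ x, z⟫ with hF
    set GF : E → E := fun z => Gφ z - Gφ x with hGF
    have hgF : ∀ z, HasGradientAt F (GF z) z := fun z => hasGradSub (hg z) (hasGradInner _ z)
    have hFconv : ConvexOn ℝ univ F := by
      apply convexOfMono hgF
      intro a b
      have : GF a - GF b = Gφ a - Gφ b := by simp [hGF]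
      rw [this]
      exact monφ a b
    set z : E := y - K⁻¹ • (GF y) with hz
    have hmin : F x ≤ F z := by
      have := firstOrder hgF hFconv x z
      have h0 : GF x = 0 := by simp [hGF]
      rw [h0] at this
      simpa using this
    have hdescF : F z ≤ F y + ⟪GF y, z - y⟫ + K / 2 * ‖z - y‖ ^ 2 := by
      have := hdesc y z
      have e1 : ⟪Gφ x, z⟫ = ⟪Gφ x, y⟫ + ⟪Gφ x, z - y⟫ := by
        rw [← inner_add_right]; congr 1; abel
      have e2 : ⟪GF y, z - y⟫ = ⟪Gφ y, z - y⟫ - ⟪Gφ x, z - y⟫ := by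
        rw [hGF]; exact inner_sub_left _ _ _
      simp only [hF]
      rw [e1, e2]
      linarith
    have ez : z - y = -(K⁻¹) • (GF y) := by rw [hz, neg_smul]; abel
    have einner : ⟪GF y, z - y⟫ = -(K⁻¹) * ‖GF y‖ ^ 2 := by
      rw [ez, real_inner_smul_right, real_inner_self_eq_norm_sq]
    have enorm : ‖z - y‖ ^ 2 = (K⁻¹) ^ 2 * ‖GF y‖ ^ 2 := by
      rw [ez, norm_smul]
      simp [mul_pow, abs_of_pos hK]
    have hKne : K ≠ 0 := ne_of_gt hK
    have : F x ≤ F y - ‖GF y‖ ^ 2 / (2 * K) := by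
      have h3 := hmin.trans hdescF
      rw [einner, enorm] at h3
      have : K / 2 * ((K⁻¹) ^ 2 * ‖GF y‖ ^ 2) = ‖GF y‖ ^ 2 / (2 * K) := by
        field_simp
      rw [this] at h3
      have h4 : -(K⁻¹) * ‖GF y‖ ^ 2 = -(‖GF y‖ ^ 2 / K) := by field_simp
      rw [h4] at h3
      have h5 : ‖GF y‖ ^ 2 / K - ‖GF y‖ ^ 2 / (2 * K) = ‖GF y‖ ^ 2 / (2 * K) := by
        field_simp; ring
      linarith
    simp only [hF, hGF] at this
    linarith
  intro x y
  have h1 := key x y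
  have h2 := key y x
  have e2 : ⟪Gφ x - Gφ y, x - y⟫ = ⟪Gφ x, x⟫ - ⟪Gφ x, y⟫ - ⟪Gφ y, x⟫ + ⟪Gφ y, y⟫ := by
    rw [inner_sub_left, inner_sub_right, inner_sub_right]; ring
  have e1' : ‖Gφ y - Gφ x‖ = ‖Gφ x - Gφ y‖ := norm_sub_rev _ _
  rw [e1'] at h1
  rw [e2]
  have hsum := add_le_add h1 h2
  have ehalf : ‖Gφ x - Gφ y‖ ^ 2 / (2 * K) + ‖Gφ x - Gφ y‖ ^ 2 / (2 * K)
      = ‖Gφ x - Gφ y‖ ^ 2 / K := by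
    field_simp
    ring
  have hS : ‖Gφ x - Gφ y‖ ^ 2 / K ≤ ⟪Gφ x, x⟫ - ⟪Gφ x, y⟫ - ⟪Gφ y, x⟫ + ⟪Gφ y, y⟫ := by
    linarith
  rw [div_le_iff₀ hK] at hS
  linarith

set_option maxHeartbeats 2000000 in
/-- Contraction of the gradient descent map for strongly convex smooth functions:
if `f : ℝ^d → ℝ` is differentiable, `μ`-strongly convex and has `L`-Lipschitz
gradient with `0 < μ ≤ L`, and `0 < h ≤ 2/(μ+L)`, then the map `x ↦ x − h∇f(x)` is
`(1 − μh)`-Lipschitz; in particular, if `w*` is a global minimizer of `f` then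
`‖x − h∇f(x) − w*‖ ≤ (1 − μh)‖x − w*‖` for every `x`. -/
theorem gradient_step_contraction {d : ℕ} (μ L h : ℝ) (hμ : 0 < μ) (hμL : μ ≤ L)
    (hh0 : 0 < h) (hh : h ≤ 2 / (μ + L))
    (f : EuclideanSpace ℝ (Fin d) → ℝ)
    (hdiff : Differentiable ℝ f)
    (hsc : ConvexOn ℝ Set.univ (fun x => f x - μ / 2 * ‖x‖ ^ 2))
    (hlip : ∀ x y, ‖gradient f x - gradient f y‖ ≤ L * ‖x - y‖) :
    (∀ x y : EuclideanSpace ℝ (Fin d),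
        ‖(x - h • gradient f x) - (y - h • gradient f y)‖ ≤ (1 - μ * h) * ‖x - y‖) ∧
      ∀ wstar : EuclideanSpace ℝ (Fin d), (∀ z, f wstar ≤ f z) →
        ∀ x, ‖x - h • gradient f x - wstar‖ ≤ (1 - μ * h) * ‖x - wstar‖ := by
  have hμL0 : 0 < μ + L := by linarith
  have hhs : h * (μ + L) ≤ 2 := by
    rw [div_eq_mul_inv] at hh
    calc h * (μ + L) ≤ (2 * (μ + L)⁻¹) * (μ + L) := by
          apply mul_le_mul_of_nonneg_right hh (le_of_lt hμL0)
      _ = 2 := by field_simp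
  have h1μ : 0 ≤ 1 - μ * h := by nlinarith
  set gf : EuclideanSpace ℝ (Fin d) → EuclideanSpace ℝ (Fin d) := fun z => gradient f z with hgf_def
  have hgf : ∀ z, HasGradientAt f (gf z) z := fun z => (hdiff z).hasGradientAt
  set φ : EuclideanSpace ℝ (Fin d) → ℝ := fun z => f z - μ / 2 * ‖z‖ ^ 2 with hφ_def
  set Gφ : EuclideanSpace ℝ (Fin d) → EuclideanSpace ℝ (Fin d) := fun z => gf z - μ • z
    with hGφ_def
  have hgφ : ∀ z, HasGradientAt φ (Gφ z) z := by
    intro z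
    have h1 := hasGradSub (hgf z) (hasGradNormSq (μ / 2) z)
    rw [show (2 * (μ / 2)) = μ by ring] at h1
    exact h1
  have φconv : ConvexOn ℝ univ φ := hsc
  set ψ : EuclideanSpace ℝ (Fin d) → ℝ := fun z => L / 2 * ‖z‖ ^ 2 - f z with hψ_def
  set Gψ : EuclideanSpace ℝ (Fin d) → EuclideanSpace ℝ (Fin d) := fun z => L • z - gf z
    with hGψ_def
  have hgψ : ∀ z, HasGradientAt ψ (Gψ z) z := by
    intro z
    have h1 := hasGradSub (hasGradNormSq (L / 2) z) (hgf z)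
    rw [show (2 * (L / 2)) = L by ring] at h1
    exact h1
  have ψconv : ConvexOn ℝ univ ψ := by
    apply convexOfMono hgψ
    intro a b
    have e : Gψ a - Gψ b = L • (a - b) - (gf a - gf b) := by
      simp only [hGψ_def]
      module
    rw [e, inner_sub_left, real_inner_smul_left, real_inner_self_eq_norm_sq]
    have h1 := hlip a b
    have h2 := real_inner_le_norm (gf a - gf b) (a - b)
    have h3 : ‖a - b‖ ≥ 0 := norm_nonneg _
    nlinarith
  -- monotonicity of Gφ
  have monφ : ∀ a b, 0 ≤ ⟪Gφ a - Gφ b, a - b⟫ := by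
    intro a b
    have h1 := firstOrder hgφ φconv a b
    have h2 := firstOrder hgφ φconv b a
    have ea : ⟪Gφ a, a - b⟫ = -⟪Gφ a, b - a⟫ := by
      rw [← inner_neg_right]; congr 1; abel
    rw [inner_sub_left, ea]
    linarith
  -- descent lemma for φ
  have descφ : ∀ y z, φ z ≤ φ y + ⟪Gφ y, z - y⟫ + (L - μ) / 2 * ‖z - y‖ ^ 2 := by
    intro y z
    have hfo := firstOrder hgψ ψconv y z
    have e1 : ⟪Gφ y, z - y⟫ + ⟪Gψ y, z - y⟫ = (L - μ) * ⟪y, z - y⟫ := by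
      rw [← inner_add_left]
      have : Gφ y + Gψ y = (L - μ) • y := by
        simp only [hGφ_def, hGψ_def, sub_smul]
        module
      rw [this, real_inner_smul_left]
    have e2 : ‖z - y‖ ^ 2 = ‖z‖ ^ 2 - 2 * ⟪z, y⟫ + ‖y‖ ^ 2 := norm_sub_sq_real z y
    have e3 : ⟪y, z - y⟫ = ⟪z, y⟫ - ‖y‖ ^ 2 := by
      rw [inner_sub_right, real_inner_self_eq_norm_sq, real_inner_comm]
    rw [e3] at e1
    simp only [hφ_def, hψ_def] at hfo ⊢
    rw [e2]
    nlinarith [e1, hfo]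
  -- key inequality
  have keyineq : ∀ x y, h * ‖Gφ x - Gφ y‖ ^ 2 ≤ 2 * (1 - μ * h) * ⟪Gφ x - Gφ y, x - y⟫ := by
    intro x y
    have hsr := monφ x y
    rcases eq_or_lt_of_le hμL with heq | hlt
    · -- μ = L : gradient of φ is constant along differences
      have hs0 : ‖Gφ x - Gφ y‖ ^ 2 ≤ 0 := by
        have e : Gφ x - Gφ y = (gf x - gf y) - μ • (x - y) := by
          simp only [hGφ_def]
          module
        rw [e, norm_sub_sq_real, real_inner_smul_right, norm_smul]
        have h1 := hlip x y
        rw [← heq] at h1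
        have h2 : 0 ≤ ⟪gf x - gf y, x - y⟫ := by
          have := hsr
          rw [e, inner_sub_left, real_inner_smul_left, real_inner_self_eq_norm_sq] at this
          nlinarith [norm_nonneg (x - y)]
        have h2' : μ * ‖x - y‖ ^ 2 ≤ ⟪gf x - gf y, x - y⟫ := by
          have := hsr
          rw [e, inner_sub_left, real_inner_smul_left, real_inner_self_eq_norm_sq] at this
          linarith
        have h1' : ‖gf x - gf y‖ ≤ μ * ‖x - y‖ := h1
        rw [Real.norm_eq_abs, abs_of_pos hμ]
        nlinarith [norm_nonneg (gf x - gf y), norm_nonneg (x - y)]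
      have hs0' : ‖Gφ x - Gφ y‖ ^ 2 = 0 := le_antisymm hs0 (sq_nonneg _)
      rw [hs0', mul_zero]
      exact mul_nonneg (mul_nonneg (by norm_num) h1μ) hsr
    · -- μ < L
      have hK : 0 < L - μ := by linarith
      have coco := cocoercive hgφ φconv hK descφ x y
      have hcomb : h * (L - μ) ≤ 2 * (1 - μ * h) := by nlinarith [hhs, mul_nonneg hh0.le hμ.le]
      nlinarith [mul_le_mul_of_nonneg_left coco (le_of_lt hh0),
        mul_le_mul_of_nonneg_right hcomb hsr]
  -- the contraction property
  have main : ∀ x y : EuclideanSpace ℝ (Fin d),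
      ‖(x - h • gradient f x) - (y - h • gradient f y)‖ ≤ (1 - μ * h) * ‖x - y‖ := by
    intro x y
    set r := x - y with hr
    set s := Gφ x - Gφ y with hs
    have eA : (x - h • gradient f x) - (y - h • gradient f y) = (1 - μ * h) • r - h • s := by
      simp only [hs, hr, hGφ_def, hgf_def, sub_smul, smul_sub, one_smul, mul_smul]
      module
    have hsq : ‖(1 - μ * h) • r - h • s‖ ^ 2 ≤ ((1 - μ * h) * ‖r‖) ^ 2 := by
      rw [norm_sub_sq_real, real_inner_smul_left, real_inner_smul_right, norm_smul, norm_smul]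
      simp only [Real.norm_eq_abs]
      rw [abs_of_nonneg h1μ, abs_of_pos hh0]
      have h1 := keyineq x y
      have h2 : ⟪r, s⟫ = ⟪s, r⟫ := real_inner_comm s r
      rw [h2]
      rw [mul_pow, mul_pow]
      nlinarith [keyineq x y]
    rw [eA]
    have hb : 0 ≤ (1 - μ * h) * ‖r‖ := mul_nonneg h1μ (norm_nonneg r)
    nlinarith [hsq, norm_nonneg ((1 - μ * h) • r - h • s)]
  refine ⟨main, ?_⟩
  intro wstar hmin x
  have hloc : IsLocalMin f wstar := Filter.Eventually.of_forall hmin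
  have hgrad0 : gradient f wstar = 0 := by
    have h0 : fderiv ℝ f wstar = 0 := hloc.fderiv_eq_zero
    simp [gradient, h0]
  have := main x wstar
  rw [hgrad0, smul_zero, sub_zero] at this
  exact this
end

section
/- Let f : ℝ^d → ℝ be differentiable, μ-strongly convex and have L-Lipschitz gradient with 0 < μ ≤ L, let w* be the global minimizer of f, and let the step size h satisfy 0 < h ≤ 2/(μ+L). Then for any w ∈ ℝ^d and any error vector e ∈ ℝ^d, the inexact gradient step w⁺ := w − h∇f(w) + e satisfies ‖w⁺ − w*‖ ≤ (1 − μh)·‖w − w*‖ + ‖e‖. -/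
open Set
open scoped RealInnerProductSpace

variable {E : Type*} [NormedAddCommGroup E] [InnerProductSpace ℝ E] [CompleteSpace E]

/-- derivative of `f` along a line, given gradients of `f`. -/
lemma hasDerivAt_line {f : E → ℝ} {f' : E → E} (hd : ∀ z, HasGradientAt f (f' z) z)
    (x y : E) (t : ℝ) :
    HasDerivAt (fun t : ℝ => f (x + t • (y - x))) ⟪f' (x + t • (y - x)), y - x⟫ t := by
  have h1 : HasDerivAt (fun t : ℝ => x + t • (y - x)) (y - x) t := by
    simpa using ((hasDerivAt_id t).smul_const (y - x)).const_add x
  have h2 := hd (x + t • (y - x))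
  rw [hasGradientAt_iff_hasFDerivAt] at h2
  have h3 := h2.comp_hasDerivAt t h1
  simp only [InnerProductSpace.toDual_apply_apply] at h3
  exact h3

/-- tangent line inequality for differentiable convex functions. -/
lemma tangent_le {f : E → ℝ} {f' : E → E} (hd : ∀ z, HasGradientAt f (f' z) z)
    (hc : ConvexOn ℝ Set.univ f) (x y : E) :
    f x + ⟪f' x, y - x⟫ ≤ f y := by
  have hφc : ConvexOn ℝ Set.univ (fun t : ℝ => f (x + t • (y - x))) := by
    have h0 := hc.comp_affineMap (AffineMap.lineMap x y)
    have he : (f ∘ (AffineMap.lineMap x y)) = fun t : ℝ => f (x + t • (y - x)) := by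
      funext t
      simp [AffineMap.lineMap_apply, add_comm]
    rw [he] at h0
    simpa using h0
  have hs := hφc.le_slope_of_hasDerivAt (mem_univ (0:ℝ)) (mem_univ (1:ℝ)) one_pos
    (hasDerivAt_line hd x y 0)
  simp only [slope_def_field, zero_smul, add_zero, one_smul] at hs
  have : ⟪f' x, y - x⟫ ≤ f (x + (y - x)) - f x := by
    simpa [div_one] using hs
  have hxy : x + (y - x) = y := by abel
  rw [hxy] at this
  linarith

/-- monotone gradient implies convex. -/
lemma convexOn_of_monotone_grad {f : E → ℝ} {f' : E → E} (hd : ∀ z, HasGradientAt f (f' z) z)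
    (hm : ∀ x y, 0 ≤ ⟪f' x - f' y, x - y⟫) : ConvexOn ℝ Set.univ f := by
  refine ⟨convex_univ, fun x _ y _ a b ha hb hab => ?_⟩
  set φ : ℝ → ℝ := fun t => f (x + t • (y - x)) with hφ
  have hdiffφ : Differentiable ℝ φ := fun t => (hasDerivAt_line hd x y t).differentiableAt
  have hderiv : ∀ t, deriv φ t = ⟪f' (x + t • (y - x)), y - x⟫ := fun t =>
    (hasDerivAt_line hd x y t).deriv
  have hmono : Monotone (deriv φ) := by
    intro s t hst
    rw [hderiv, hderiv]
    rcases eq_or_lt_of_le hst with rfl | hlt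
    · exact le_rfl
    · have h1 := hm (x + t • (y - x)) (x + s • (y - x))
      have h2 : (x + t • (y - x)) - (x + s • (y - x)) = (t - s) • (y - x) := by
        rw [sub_smul]; abel
      rw [h2, real_inner_smul_right, inner_sub_left] at h1
      nlinarith
  have hconv := hmono.convexOn_univ_of_deriv hdiffφ
  have h2 := hconv.2 (mem_univ (0:ℝ)) (mem_univ (1:ℝ)) ha hb hab
  have hb1 : a • (0:ℝ) + b • (1:ℝ) = b := by simp
  rw [hb1] at h2
  have hx1 : x + b • (y - x) = a • x + b • y := by
    have haa : a = 1 - b := by linarith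
    rw [haa, smul_sub, sub_smul, one_smul]; abel
  have hφb : φ b = f (a • x + b • y) := by rw [hφ]; simp only; rw [hx1]
  have hφ0 : φ 0 = f x := by simp [hφ]
  have hφ1 : φ 1 = f y := by simp [hφ]
  rw [hφb, hφ0, hφ1] at h2
  simpa using h2

/-- gradient of `c‖z‖² + b f z + ⟪a,z⟫`. -/
lemma hasGradientAt_combo {f : E → ℝ} {F' : E} {x : E} (hf : HasGradientAt f F' x)
    (c b : ℝ) (a : E) :
    HasGradientAt (fun z : E => c * ‖z‖ ^ 2 + b * f z + ⟪a, z⟫)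
      ((2 * c) • x + b • F' + a) x := by
  rw [hasGradientAt_iff_hasFDerivAt] at hf ⊢
  have h1 : HasFDerivAt (fun z : E => ‖z‖ ^ 2) (2 • (innerSL ℝ x : E →L[ℝ] ℝ)) x :=
    (hasStrictFDerivAt_norm_sq x).hasFDerivAt
  have h2 : HasFDerivAt (fun z : E => ⟪a, z⟫) (innerSL ℝ a : E →L[ℝ] ℝ) x :=
    (innerSL ℝ a).hasFDerivAt
  have h3 := ((h1.const_mul c).add (hf.const_mul b)).add h2
  refine h3.congr_fderiv ?_
  ext v
  simp [InnerProductSpace.toDual_apply_apply, inner_add_left, real_inner_smul_left, two_smul]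
  ring
/-- gradient of `c‖z‖² + b f z + ⟪a,z⟫`, flexible form. -/
lemma hasGradientAt_combo' {f : E → ℝ} {F' : E} {x : E} (hf : HasGradientAt f F' x)
    (c b : ℝ) (a : E) {g : E → ℝ} {v : E}
    (hg : ∀ z, c * ‖z‖ ^ 2 + b * f z + ⟪a, z⟫ = g z)
    (hv : (2 * c) • x + b • F' + a = v) :
    HasGradientAt g v x := by
  rw [← funext hg, ← hv]
  exact hasGradientAt_combo hf c b a

/-- convexity gives monotone gradients. -/
lemma mono_of_convex {f : E → ℝ} {f' : E → E} (hd : ∀ z, HasGradientAt f (f' z) z)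
    (hc : ConvexOn ℝ Set.univ f) (x y : E) : 0 ≤ ⟪f' x - f' y, x - y⟫ := by
  have t1 := tangent_le hd hc x y
  have t2 := tangent_le hd hc y x
  have e1 : ⟪f' x, y - x⟫ = -⟪f' x, x - y⟫ := by rw [← inner_neg_right, neg_sub]
  rw [e1] at t1
  rw [inner_sub_left]
  linarith



/-- one-sided cocoercivity bound. -/
lemma one_sided {f : E → ℝ} {μ L : ℝ} (hμL : μ < L)
    (hdiff : Differentiable ℝ f)
    (hsc : ConvexOn ℝ Set.univ (fun x => f x - μ / 2 * ‖x‖ ^ 2))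
    (hlip : ∀ x y, ‖gradient f x - gradient f y‖ ≤ L * ‖x - y‖)
    (g' : E → E) (hg'def : ∀ z, g' z = gradient f z - μ • z) (x y : E) :
    f x - μ / 2 * ‖x‖ ^ 2 - ⟪g' x, x⟫
      ≤ f y - μ / 2 * ‖y‖ ^ 2 - ⟪g' x, y⟫
        - (L - μ)⁻¹ / 2 * ‖g' y - g' x‖ ^ 2 := by
  have hL' : 0 < L - μ := by linarith
  have hGz : ∀ z, HasGradientAt f (gradient f z) z := fun z => (hdiff z).hasGradientAt
  -- gradient of the strongly-convex part
  have hg'd : ∀ z, HasGradientAt (fun w => f w - μ / 2 * ‖w‖ ^ 2) (g' z) z := by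
    intro z
    refine hasGradientAt_combo' (hGz z) (-(μ/2)) 1 0 (fun w => ?_) ?_
    · simp; ring
    · rw [hg'def]; module
  have hg'mono := mono_of_convex hg'd hsc
  -- the shifted function Φ and its quadratic companion Ψ
  set Φ : E → ℝ := fun w => f w - μ / 2 * ‖w‖ ^ 2 - ⟪g' x, w⟫ with hΦdef
  set Φ' : E → E := fun w => g' w - g' x with hΦ'def
  set Ψ : E → ℝ := fun w => L / 2 * ‖w‖ ^ 2 - f w + ⟪g' x, w⟫ with hΨdef
  set Ψ' : E → E := fun w => L • w - gradient f w + g' x with hΨ'def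
  have hΦd : ∀ z, HasGradientAt Φ (Φ' z) z := by
    intro z
    refine hasGradientAt_combo' (hGz z) (-(μ/2)) 1 (-(g' x)) (fun w => ?_) ?_
    · simp [hΦdef, inner_neg_left]; ring
    · simp only [hΦ'def, hg'def]; module
  have hΨd : ∀ z, HasGradientAt Ψ (Ψ' z) z := by
    intro z
    refine hasGradientAt_combo' (hGz z) (L/2) (-1) (g' x) (fun w => ?_) ?_
    · simp [hΨdef]; ring
    · rw [hΨ'def]; module
  have hΦmono : ∀ a b, 0 ≤ ⟪Φ' a - Φ' b, a - b⟫ := by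
    intro a b
    have : Φ' a - Φ' b = g' a - g' b := by rw [hΦ'def]; simp only; abel
    rw [this]; exact hg'mono a b
  have hΨmono : ∀ a b, 0 ≤ ⟪Ψ' a - Ψ' b, a - b⟫ := by
    intro a b
    have h1 : Ψ' a - Ψ' b = L • (a - b) - (gradient f a - gradient f b) := by
      rw [hΨ'def]; simp only; module
    rw [h1, inner_sub_left, real_inner_smul_left, real_inner_self_eq_norm_sq]
    have h2 : ⟪gradient f a - gradient f b, a - b⟫ ≤ ‖gradient f a - gradient f b‖ * ‖a - b‖ :=
      real_inner_le_norm _ _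
    have h3 := mul_le_mul_of_nonneg_right (hlip a b) (norm_nonneg (a - b))
    nlinarith [norm_nonneg (a - b)]
  have hΦconv := convexOn_of_monotone_grad hΦd hΦmono
  have hΨconv := convexOn_of_monotone_grad hΨd hΨmono
  -- the descent step
  set t : ℝ := (L - μ)⁻¹ with ht'
  have ht : t * (L - μ) = 1 := by rw [ht']; field_simp
  set u : E := g' y - g' x with hu
  set z : E := y - t • u with hz
  -- key 1 : Φ x is the min of Φ
  have hΦ'x : Φ' x = 0 := by rw [hΦ'def]; simp
  have key1 : Φ x ≤ Φ z := by
    have := tangent_le hΦd hΦconv x z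
    rwa [hΦ'x, inner_zero_left, add_zero] at this
  -- key 2 : descent inequality
  have key2 : Φ z ≤ Φ y - t / 2 * ‖u‖ ^ 2 := by
    have htan := tangent_le hΨd hΨconv y z
    have hrel : ∀ w, Ψ w = (L - μ) / 2 * ‖w‖ ^ 2 - Φ w := by
      intro w; rw [hΨdef, hΦdef]; simp only; ring
    rw [hrel y, hrel z] at htan
    have hzy : z - y = -(t • u) := by rw [hz]; abel
    have hΨ'y : Ψ' y = (L - μ) • y - u := by
      rw [hΨ'def, hu]; simp only; rw [hg'def y]; module
    have hinner : ⟪Ψ' y, z - y⟫ = -(t * ((L - μ) * ⟪y, u⟫ - ‖u‖ ^ 2)) := by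
      rw [hzy, inner_neg_right, real_inner_smul_right, hΨ'y, inner_sub_left,
        real_inner_smul_left, real_inner_self_eq_norm_sq]
    have hznorm : ‖z‖ ^ 2 = ‖y‖ ^ 2 - 2 * (t * ⟪y, u⟫) + t ^ 2 * ‖u‖ ^ 2 := by
      rw [hz, norm_sub_sq_real, real_inner_smul_right, norm_smul]
      simp [mul_pow, sq_abs]
    rw [hinner, hznorm] at htan
    have h6 : (L - μ) / 2 * (t ^ 2 * ‖u‖ ^ 2) - t * ‖u‖ ^ 2 = -(t / 2 * ‖u‖ ^ 2) := by
      rw [ht']; field_simp; ring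
    nlinarith [htan, h6]
  -- combine
  have hfinal := le_trans key1 key2
  have hΦx : Φ x = f x - μ / 2 * ‖x‖ ^ 2 - ⟪g' x, x⟫ := by rw [hΦdef]
  have hΦy : Φ y = f y - μ / 2 * ‖y‖ ^ 2 - ⟪g' x, y⟫ := by rw [hΦdef]
  rw [hΦx, hΦy, hu] at hfinal
  rw [ht'] at hfinal ⊢
  linarith

/-- cocoercivity of the gradient of the convex part. -/
lemma coco {f : E → ℝ} {μ L : ℝ} (hμL : μ < L)
    (hdiff : Differentiable ℝ f)
    (hsc : ConvexOn ℝ Set.univ (fun x => f x - μ / 2 * ‖x‖ ^ 2))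
    (hlip : ∀ x y, ‖gradient f x - gradient f y‖ ≤ L * ‖x - y‖)
    (g' : E → E) (hg'def : ∀ z, g' z = gradient f z - μ • z) (x y : E) :
    ‖g' x - g' y‖ ^ 2 ≤ (L - μ) * ⟪g' x - g' y, x - y⟫ := by
  have hL' : 0 < L - μ := by linarith
  have h1 := one_sided hμL hdiff hsc hlip g' hg'def x y
  have h2 := one_sided hμL hdiff hsc hlip g' hg'def y x
  have hnrev : ‖g' x - g' y‖ = ‖g' y - g' x‖ := norm_sub_rev _ _
  have hsum : (L - μ)⁻¹ * ‖g' x - g' y‖ ^ 2 ≤ ⟪g' x - g' y, x - y⟫ := by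
    rw [inner_sub_left, inner_sub_right, inner_sub_right]
    rw [hnrev]
    rw [hnrev] at h2
    linarith
  have := mul_le_mul_of_nonneg_left hsum (le_of_lt hL')
  calc ‖g' x - g' y‖ ^ 2 = (L - μ) * ((L - μ)⁻¹ * ‖g' x - g' y‖ ^ 2) := by
        field_simp
    _ ≤ (L - μ) * ⟪g' x - g' y, x - y⟫ := this

set_option maxHeartbeats 1000000 in
/-- Inexact gradient step for strongly convex smooth functions: if `f : ℝ^d → ℝ` is
differentiable, `μ`-strongly convex with `L`-Lipschitz gradient (`0 < μ ≤ L`), `w*`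
is a global minimizer of `f` and `0 < h ≤ 2/(μ+L)`, then the inexact update
`w⁺ = w − h∇f(w) + e` satisfies `‖w⁺ − w*‖ ≤ (1 − μh)‖w − w*‖ + ‖e‖`. -/
theorem inexact_gradient_step_contraction {d : ℕ} (μ L h : ℝ) (hμ : 0 < μ) (hμL : μ ≤ L)
    (hh0 : 0 < h) (hh : h ≤ 2 / (μ + L))
    (f : EuclideanSpace ℝ (Fin d) → ℝ)
    (hdiff : Differentiable ℝ f)
    (hsc : ConvexOn ℝ Set.univ (fun x => f x - μ / 2 * ‖x‖ ^ 2))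
    (hlip : ∀ x y, ‖gradient f x - gradient f y‖ ≤ L * ‖x - y‖)
    (wstar : EuclideanSpace ℝ (Fin d)) (hmin : ∀ z, f wstar ≤ f z)
    (w e : EuclideanSpace ℝ (Fin d)) :
    ‖w - h • gradient f w + e - wstar‖ ≤ (1 - μ * h) * ‖w - wstar‖ + ‖e‖ := by
  have hμL2 : 0 < μ + L := by linarith
  have hhsum : h * (μ + L) ≤ 2 := (le_div_iff₀ hμL2).mp hh
  have h1μ : 0 ≤ 1 - μ * h := by nlinarith
  -- gradient vanishes at the minimizer
  have hG0 : gradient f wstar = 0 := by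
    have hloc : IsLocalMin f wstar := Filter.Eventually.of_forall fun z => hmin z
    have hfd : fderiv ℝ f wstar = 0 := hloc.fderiv_eq_zero
    simp only [gradient, hfd, map_zero]
  set v : EuclideanSpace ℝ (Fin d) := w - wstar with hv
  set u : EuclideanSpace ℝ (Fin d) := gradient f w with huu
  set q : EuclideanSpace ℝ (Fin d) := u - μ • v with hq
  -- triangle inequality step
  have htri : ‖w - h • gradient f w + e - wstar‖ ≤ ‖v - h • u‖ + ‖e‖ := by
    have heq : w - h • gradient f w + e - wstar = (v - h • u) + e := by
      rw [hv, huu]; abel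
    rw [heq]; exact norm_add_le _ _
  -- scalar expansions
  have hqv : ⟪q, v⟫ = ⟪u, v⟫ - μ * ‖v‖ ^ 2 := by
    rw [hq, inner_sub_left, real_inner_smul_left, real_inner_self_eq_norm_sq]
  have hsexp : ‖q‖ ^ 2 = ‖u‖ ^ 2 - 2 * (μ * ⟪u, v⟫) + μ ^ 2 * ‖v‖ ^ 2 := by
    rw [hq, norm_sub_sq_real, real_inner_smul_right, norm_smul]
    simp [mul_pow, sq_abs]
  have hexp : ‖v - h • u‖ ^ 2 = ‖v‖ ^ 2 - 2 * (h * ⟪u, v⟫) + h ^ 2 * ‖u‖ ^ 2 := by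
    rw [norm_sub_sq_real, real_inner_smul_right, norm_smul, real_inner_comm]
    simp [mul_pow, sq_abs]
  -- monotonicity of the gradient of the convex part
  have hGz : ∀ z, HasGradientAt f (gradient f z) z := fun z => (hdiff z).hasGradientAt
  have hg'd : ∀ z, HasGradientAt (fun x => f x - μ / 2 * ‖x‖ ^ 2) (gradient f z - μ • z) z := by
    intro z
    refine hasGradientAt_combo' (hGz z) (-(μ/2)) 1 0 (fun x => ?_) ?_
    · simp; ring
    · module
  have hpv : 0 ≤ ⟪q, v⟫ := by
    have := mono_of_convex hg'd hsc w wstar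
    have hrw : (gradient f w - μ • w) - (gradient f wstar - μ • wstar) = q := by
      rw [hG0, hq, huu, hv]; module
    rwa [hrw] at this
  -- the key bound, uniform in both cases μ < L and μ = L
  have hkey : ‖q‖ ^ 2 ≤ (L - μ) * ⟪q, v⟫ := by
    rcases eq_or_lt_of_le hμL with rfl | hlt
    · -- μ = L : the gradient is exactly μ • id, so q = 0
      have hulip := hlip w wstar
      rw [hG0, sub_zero] at hulip
      have hU : ‖u‖ ^ 2 ≤ μ ^ 2 * ‖v‖ ^ 2 := by
        have h0 : ‖u‖ * ‖u‖ ≤ (μ * ‖v‖) * (μ * ‖v‖) :=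
          mul_self_le_mul_self (norm_nonneg _) (by rw [huu, hv]; exact hulip)
        nlinarith
      have : ‖q‖ ^ 2 ≤ 0 := by rw [hqv] at hpv; nlinarith [hsexp]
      exact le_trans this (le_of_eq (by ring))
    · have := coco hlt hdiff hsc hlip (fun z => gradient f z - μ • z) (fun z => rfl) w wstar
      have hrw : (gradient f w - μ • w) - (gradient f wstar - μ • wstar) = q := by
        rw [hG0, hq, huu, hv]; module
      rwa [hrw] at this
  -- main contraction estimate
  have hsq : ‖v - h • u‖ ^ 2 ≤ ((1 - μ * h) * ‖v‖) ^ 2 := by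
    have hstep : 0 ≤ 2 * h * (1 - μ * h) - h ^ 2 * (L - μ) := by
      nlinarith [mul_nonneg hh0.le (sub_nonneg.mpr hhsum)]
    have hfac1 : 0 ≤ (2 * h * (1 - μ * h) - h ^ 2 * (L - μ)) * ⟪q, v⟫ :=
      mul_nonneg hstep hpv
    have hfac2 : 0 ≤ h ^ 2 * ((L - μ) * ⟪q, v⟫ - ‖q‖ ^ 2) :=
      mul_nonneg (sq_nonneg h) (by linarith)
    have hid : ((1 - μ * h) * ‖v‖) ^ 2 - (‖v‖ ^ 2 - 2 * (h * ⟪u, v⟫) + h ^ 2 * ‖u‖ ^ 2)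
        = (2 * h * (1 - μ * h) - h ^ 2 * (L - μ)) * ⟪q, v⟫
          + h ^ 2 * ((L - μ) * ⟪q, v⟫ - ‖q‖ ^ 2) := by
      rw [hqv, hsexp]; ring
    rw [hexp]
    linarith
  have hnn : 0 ≤ (1 - μ * h) * ‖v‖ := mul_nonneg h1μ (norm_nonneg v)
  have hmain : ‖v - h • u‖ ≤ (1 - μ * h) * ‖v‖ := by
    have := Real.sqrt_le_sqrt hsq
    rwa [Real.sqrt_sq (norm_nonneg _), Real.sqrt_sq hnn] at this
  calc ‖w - h • gradient f w + e - wstar‖ ≤ ‖v - h • u‖ + ‖e‖ := htri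
    _ ≤ (1 - μ * h) * ‖v‖ + ‖e‖ := by linarith
    _ = (1 - μ * h) * ‖w - wstar‖ + ‖e‖ := by rw [hv]
end

section
/- Let f : ℝ^d → ℝ be differentiable with L-Lipschitz gradient (L > 0), bounded below with f* := inf f, and satisfying the Polyak–Łojasiewicz inequality with parameter μ > 0. Then for every step size h ∈ (0, 2/L) and every w ∈ ℝ^d: f(w − h∇f(w)) − f* ≤ (1 − μh(2 − Lh))·(f(w) − f*). -/
open RealInnerProductSpace intervalIntegral

lemma descent {d : ℕ} (L : ℝ) (hL : 0 < L)
    (f : EuclideanSpace ℝ (Fin d) → ℝ)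
    (hdiff : Differentiable ℝ f)
    (hlip : ∀ x y, ‖gradient f x - gradient f y‖ ≤ L * ‖x - y‖)
    (x v : EuclideanSpace ℝ (Fin d)) :
    f (x + v) ≤ f x + ⟪gradient f x, v⟫ + L / 2 * ‖v‖ ^ 2 := by
  set c : ℝ → EuclideanSpace ℝ (Fin d) := fun t => x + t • v with hc
  have hcont : Continuous fun y => gradient f y := by
    have : LipschitzWith L.toNNReal (fun y => gradient f y) := by
      apply LipschitzWith.of_dist_le_mul
      intro a b
      simpa [dist_eq_norm, Real.coe_toNNReal _ hL.le] using hlip a b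
    exact this.continuous
  have hderiv : ∀ t : ℝ, HasDerivAt (fun t => f (c t)) ⟪gradient f (c t), v⟫ t := by
    intro t
    have h1 : HasDerivAt c v t := by
      have : HasDerivAt (fun t : ℝ => t • v) v t := by
        simpa using (hasDerivAt_id t).smul_const v
      simpa [hc] using this.const_add x
    have h2 := (hdiff (c t)).hasGradientAt.hasFDerivAt
    have := h2.comp_hasDerivAt t h1
    have h3 : HasDerivAt (fun t => f (c t)) ⟪gradient f (c t), v⟫ t := this
    exact h3
  have hgc : Continuous fun t => ⟪gradient f (c t), v⟫ := by
    exact (hcont.comp (by continuity)).inner continuous_const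
  have heq : f (x + v) - f x = ∫ t in (0:ℝ)..1, ⟪gradient f (c t), v⟫ := by
    have h0 := intervalIntegral.integral_eq_sub_of_hasDerivAt
      (f := fun t => f (c t)) (a := 0) (b := 1)
      (fun t _ => hderiv t) (hgc.intervalIntegrable 0 1)
    rw [h0]
    simp [hc]
  have hbound : ∫ t in (0:ℝ)..1, ⟪gradient f (c t), v⟫ ≤
      ∫ t in (0:ℝ)..1, (⟪gradient f x, v⟫ + L * t * ‖v‖ ^ 2) := by
    apply intervalIntegral.integral_mono_on (by norm_num) (hgc.intervalIntegrable 0 1)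
      (((by fun_prop : Continuous fun t : ℝ => ⟪gradient f x, v⟫ + L * t * ‖v‖ ^ 2)).intervalIntegrable 0 1)
    intro t ht
    have h1 : ⟪gradient f (c t) - gradient f x, v⟫ ≤ L * t * ‖v‖ ^ 2 := by
      calc ⟪gradient f (c t) - gradient f x, v⟫ ≤ ‖gradient f (c t) - gradient f x‖ * ‖v‖ :=
            real_inner_le_norm _ _
        _ ≤ (L * ‖c t - x‖) * ‖v‖ := by
            exact mul_le_mul_of_nonneg_right (hlip _ _) (norm_nonneg _)
        _ = L * t * ‖v‖ ^ 2 := by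
            simp [hc, norm_smul, abs_of_nonneg ht.1]
            ring
    have := inner_sub_left (𝕜 := ℝ) (gradient f (c t)) (gradient f x) v
    linarith [this ▸ h1]
  have hrhs : ∫ t in (0:ℝ)..1, (⟪gradient f x, v⟫ + L * t * ‖v‖ ^ 2)
      = ⟪gradient f x, v⟫ + L / 2 * ‖v‖ ^ 2 := by
    rw [show (fun t : ℝ => ⟪gradient f x, v⟫ + L * t * ‖v‖ ^ 2)
        = fun t : ℝ => ⟪gradient f x, v⟫ + (L * ‖v‖ ^ 2) * t from funext fun t => by ring]
    rw [intervalIntegral.integral_add intervalIntegrable_const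
      ((by fun_prop : Continuous fun t : ℝ => (L * ‖v‖ ^ 2) * t).intervalIntegrable 0 1),
      intervalIntegral.integral_const_mul, integral_id, intervalIntegral.integral_const]
    simp
    ring
  linarith [heq, hbound, hrhs ▸ hbound]



/-- Linear decrease of the suboptimality gap for gradient descent on
Polyak–Łojasiewicz functions: if `f : ℝ^d → ℝ` is differentiable with `L`-Lipschitz
gradient (`L > 0`), bounded below with `f* := inf f`, and satisfies the PL inequality
`f(w) − f* ≤ (1/(2μ))‖∇f(w)‖²` with `μ > 0`, then for every step size `h ∈ (0, 2/L)`
and every `w`: `f(w − h∇f(w)) − f* ≤ (1 − μh(2 − Lh))·(f(w) − f*)`. -/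
theorem pl_gradient_descent_decrease {d : ℕ} (L μ : ℝ) (hL : 0 < L) (hμ : 0 < μ)
    (f : EuclideanSpace ℝ (Fin d) → ℝ)
    (hdiff : Differentiable ℝ f)
    (hlip : ∀ x y, ‖gradient f x - gradient f y‖ ≤ L * ‖x - y‖)
    (hbdd : BddBelow (Set.range f))
    (hpl : ∀ w, f w - (⨅ x, f x) ≤ 1 / (2 * μ) * ‖gradient f w‖ ^ 2) :
    ∀ h : ℝ, 0 < h → h < 2 / L → ∀ w,
      f (w - h • gradient f w) - (⨅ x, f x) ≤
        (1 - μ * h * (2 - L * h)) * (f w - (⨅ x, f x)) := by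
  intro h hh0 hh2 w
  have hdesc := descent L hL f hdiff hlip w ((-h) • gradient f w)
  have hstep : w + (-h) • gradient f w = w - h • gradient f w := by
    rw [neg_smul, ← sub_eq_add_neg]
  rw [hstep] at hdesc
  have hin : ⟪gradient f w, (-h) • gradient f w⟫ = -h * ‖gradient f w‖ ^ 2 := by
    rw [real_inner_smul_right, real_inner_self_eq_norm_sq]
  have hnrm : ‖(-h) • gradient f w‖ ^ 2 = h ^ 2 * ‖gradient f w‖ ^ 2 := by
    rw [norm_smul]; simp [abs_of_pos hh0]; ring
  rw [hin, hnrm] at hdesc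
  -- hdesc : f (w - h • ∇f w) ≤ f w + (-h * G) + L/2 * (h^2 * G)
  have hG : 2 * μ * (f w - (⨅ x, f x)) ≤ ‖gradient f w‖ ^ 2 := by
    have := hpl w
    rw [div_mul_eq_mul_div, one_mul, le_div_iff₀ (by positivity)] at this
    linarith
  have hc : 0 ≤ h * (2 - L * h) / 2 := by
    have h2 : 0 < 2 - L * h := by
      rw [lt_div_iff₀ hL] at hh2; linarith
    positivity
  nlinarith [hdesc, hG, hc, mul_le_mul_of_nonneg_left hG hc]
end

section
/- Let f : ℝ^d → ℝ be differentiable with L-Lipschitz gradient (L > 0), bounded below with f* := inf f, and satisfying the Polyak–Łojasiewicz inequality with parameter μ > 0. Let h ∈ (0, 2/L), let w, e ∈ ℝ^d, and set w⁺ := w − h∇f(w) + e. Suppose G ≥ 0 is such that ‖∇f(x)‖ ≤ G for every x on the line segment joining w − h∇f(w) and w⁺. Then f(w⁺) − f* ≤ (1 − μh(2 − Lh))·(f(w) − f*) + G·‖e‖. -/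
open InnerProductSpace intervalIntegral

lemma descent_lemma {d : ℕ} (L : ℝ) (hL : 0 < L) (f : EuclideanSpace ℝ (Fin d) → ℝ)
    (hdiff : Differentiable ℝ f)
    (hlip : ∀ x y, ‖gradient f x - gradient f y‖ ≤ L * ‖x - y‖)
    (x v : EuclideanSpace ℝ (Fin d)) :
    f (x + v) ≤ f x + inner ℝ (gradient f x) v + L / 2 * ‖v‖ ^ 2 := by
  have hgc : Continuous (fun p => gradient f p) := by
    apply LipschitzWith.continuous (K := L.toNNReal)
    apply LipschitzWith.of_dist_le_mul
    intro a b
    simpa [dist_eq_norm, Real.coe_toNNReal _ hL.le] using hlip a b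
  set g' : ℝ → ℝ := fun t => inner ℝ (gradient f (x + t • v)) v with hg'
  have key : ∀ t : ℝ, HasDerivAt (fun t : ℝ => f (x + t • v)) (g' t) t := by
    intro t
    have hc : HasDerivAt (fun t : ℝ => x + t • v) v t := by
      simpa using ((hasDerivAt_id t).smul_const v).const_add x
    have hf := ((hdiff (x + t • v)).hasGradientAt).hasFDerivAt
    have := hf.comp_hasDerivAt t hc
    simpa [g', InnerProductSpace.toDual_apply_apply, Function.comp_def] using this
  have hg'c : Continuous g' := by
    apply Continuous.inner
    · exact hgc.comp (by continuity)
    · exact continuous_const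
  have hint : f (x + v) - f x = ∫ t in (0:ℝ)..1, g' t := by
    have := integral_eq_sub_of_hasDerivAt (fun t _ => key t)
      (hg'c.intervalIntegrable 0 1)
    simpa using this.symm
  have hbound : ∀ t ∈ Set.Icc (0:ℝ) 1, g' t ≤ g' 0 + L * t * ‖v‖ ^ 2 := by
    intro t ht
    have h1 : g' t - g' 0 = inner ℝ (gradient f (x + t • v) - gradient f x) v := by
      simp [g', inner_sub_left]
    have h2 : inner ℝ (gradient f (x + t • v) - gradient f x) v ≤
        ‖gradient f (x + t • v) - gradient f x‖ * ‖v‖ :=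
      real_inner_le_norm _ _
    have h3 : ‖gradient f (x + t • v) - gradient f x‖ ≤ L * (t * ‖v‖) := by
      have := hlip (x + t • v) x
      simpa [norm_smul, abs_of_nonneg ht.1] using this
    nlinarith [norm_nonneg v, mul_le_mul_of_nonneg_right h3 (norm_nonneg v)]
  have hcont2 : Continuous fun t : ℝ => g' 0 + L * t * ‖v‖ ^ 2 :=
    continuous_const.add ((continuous_const.mul continuous_id).mul continuous_const)
  have hintle : (∫ t in (0:ℝ)..1, g' t) ≤ ∫ t in (0:ℝ)..1, (g' 0 + L * t * ‖v‖ ^ 2) := by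
    apply integral_mono_on (by norm_num) (hg'c.intervalIntegrable 0 1)
      (hcont2.intervalIntegrable 0 1)
    exact hbound
  have hval : (∫ t in (0:ℝ)..1, (g' 0 + L * t * ‖v‖ ^ 2)) = g' 0 + L / 2 * ‖v‖ ^ 2 := by
    have heq : ∀ t : ℝ, g' 0 + L * t * ‖v‖ ^ 2 = g' 0 + (L * ‖v‖ ^ 2) * t := by
      intro t; ring
    simp only [heq]
    rw [intervalIntegral.integral_add intervalIntegrable_const
      (((by fun_prop : Continuous fun t : ℝ => L * ‖v‖ ^ 2 * t)).intervalIntegrable 0 1),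
      intervalIntegral.integral_const_mul, integral_id]
    simp; ring
  have hg0 : g' 0 = inner ℝ (gradient f x) v := by simp [g']
  linarith [hint, hintle, hval.le, hval.ge]



/-- Inexact gradient descent on Polyak–Łojasiewicz functions: if `f : ℝ^d → ℝ` is
differentiable with `L`-Lipschitz gradient (`L > 0`), bounded below with
`f* := inf f`, satisfies the PL inequality with parameter `μ > 0`, `h ∈ (0, 2/L)`,
`w⁺ := w − h∇f(w) + e`, and `‖∇f(x)‖ ≤ G` on the segment joining `w − h∇f(w)` and
`w⁺`, then `f(w⁺) − f* ≤ (1 − μh(2 − Lh))·(f(w) − f*) + G‖e‖`. -/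
theorem pl_inexact_gradient_descent_decrease {d : ℕ} (L μ : ℝ) (hL : 0 < L) (hμ : 0 < μ)
    (f : EuclideanSpace ℝ (Fin d) → ℝ)
    (hdiff : Differentiable ℝ f)
    (hlip : ∀ x y, ‖gradient f x - gradient f y‖ ≤ L * ‖x - y‖)
    (hbdd : BddBelow (Set.range f))
    (hpl : ∀ w, f w - (⨅ x, f x) ≤ 1 / (2 * μ) * ‖gradient f w‖ ^ 2)
    (h : ℝ) (hh0 : 0 < h) (hh : h < 2 / L)
    (w e : EuclideanSpace ℝ (Fin d))
    (G : ℝ) (hG : 0 ≤ G)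
    (hseg : ∀ x ∈ segment ℝ (w - h • gradient f w) (w - h • gradient f w + e),
      ‖gradient f x‖ ≤ G) :
    f (w - h • gradient f w + e) - (⨅ x, f x) ≤
      (1 - μ * h * (2 - L * h)) * (f w - (⨅ x, f x)) + G * ‖e‖ := by
  set S := ⨅ x, f x with hS
  set g0 := gradient f w with hg0
  set y := w - h • g0 with hy
  -- descent step
  have hdesc : f y ≤ f w - h * (1 - L * h / 2) * ‖g0‖ ^ 2 := by
    have := descent_lemma L hL f hdiff hlip w (-(h • g0))
    have heq : w + -(h • g0) = y := by rw [hy]; abel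
    rw [heq] at this
    have hin : (inner ℝ g0 (-(h • g0)) : ℝ) = -(h * ‖g0‖ ^ 2) := by
      rw [inner_neg_right, real_inner_smul_right, real_inner_self_eq_norm_sq]
      try ring
    have hnrm : ‖-(h • g0)‖ ^ 2 = h ^ 2 * ‖g0‖ ^ 2 := by
      rw [norm_neg, norm_smul]
      simp [abs_of_pos hh0, mul_pow]
    rw [hin, hnrm] at this
    nlinarith [this]
  -- PL step
  have hplw := hpl w
  have hcoef : 0 ≤ h * (1 - L * h / 2) := by
    have hLh : h * L < 2 := (lt_div_iff₀ hL).mp hh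
    nlinarith
  have hfwS : 0 ≤ f w - S := by
    have : S ≤ f w := ciInf_le hbdd w
    linarith
  have hstep1 : f y - S ≤ (1 - μ * h * (2 - L * h)) * (f w - S) := by
    have hgsq : 2 * μ * (f w - S) ≤ ‖g0‖ ^ 2 := by
      have h2μ : 0 < 2 * μ := by linarith
      rw [hS, hg0]
      rw [one_div_mul_eq_div, le_div_iff₀ (by linarith : (0:ℝ) < 2 * μ)] at hplw
      nlinarith [hplw]
    nlinarith [mul_le_mul_of_nonneg_left hgsq hcoef]
  -- error step
  have herr : f (y + e) - f y ≤ G * ‖e‖ := by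
    have hmvt : ‖f (y + e) - f y‖ ≤ G * ‖(y + e) - y‖ := by
      apply (convex_segment y (y + e)).norm_image_sub_le_of_norm_fderiv_le
        (fun x _ => hdiff x)
        (fun x hx => ?_) (left_mem_segment ℝ y (y + e)) (right_mem_segment ℝ y (y + e))
      have hfd : fderiv ℝ f x = InnerProductSpace.toDual ℝ _ (gradient f x) :=
        ((hdiff x).hasGradientAt).hasFDerivAt.fderiv
      rw [hfd, (InnerProductSpace.toDual ℝ _).norm_map]
      exact hseg x hx
    have : f (y + e) - f y ≤ ‖f (y + e) - f y‖ := le_abs_self _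
    simp only [add_sub_cancel_left] at hmvt
    linarith
  linarith
end

section
/- Let f : ℝ^d → ℝ be differentiable with L-Lipschitz gradient (L > 0). For any w, e ∈ ℝ^d and any h ≥ 0, the inexact gradient step w⁺ := w − h∇f(w) + e satisfies f(w) − f(w⁺) ≥ h(1 − Lh)·‖∇f(w)‖² − ‖∇f(w)‖·‖e‖ − L·‖e‖². -/
open InnerProductSpace

lemma descent_aux {d : ℕ} (L : ℝ) (hL : 0 ≤ L)
    (f : EuclideanSpace ℝ (Fin d) → ℝ)
    (hdiff : Differentiable ℝ f)
    (hlip : ∀ x y, ‖gradient f x - gradient f y‖ ≤ L * ‖x - y‖)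
    (x v : EuclideanSpace ℝ (Fin d)) :
    f (x + v) ≤ f x + inner ℝ (gradient f x) v + L / 2 * ‖v‖ ^ 2 := by
  set g : ℝ → ℝ := fun t =>
    f (x + t • v) - t * inner ℝ (gradient f x) v - L / 2 * t ^ 2 * ‖v‖ ^ 2 with hg
  have key : ∀ t : ℝ, HasDerivAt g
      ((inner ℝ (gradient f (x + t • v)) v : ℝ) - inner ℝ (gradient f x) v - L * t * ‖v‖ ^ 2) t := by
    intro t
    have hline : HasDerivAt (fun t : ℝ => x + t • v) v t := by
      simpa using (((hasDerivAt_id t).smul_const v).const_add x)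
    have h1 : HasDerivAt (fun t : ℝ => f (x + t • v))
        ((inner ℝ (gradient f (x + t • v)) v : ℝ)) t := by
      have := ((hdiff (x + t • v)).hasGradientAt.hasFDerivAt).comp_hasDerivAt t hline
      simpa [InnerProductSpace.toDual_apply_apply, Function.comp_def] using this
    have h2 : HasDerivAt (fun t : ℝ => t * inner ℝ (gradient f x) v)
        ((inner ℝ (gradient f x) v : ℝ)) t := by
      simpa using (hasDerivAt_id t).mul_const (inner ℝ (gradient f x) v : ℝ)
    have h3 : HasDerivAt (fun t : ℝ => L / 2 * t ^ 2 * ‖v‖ ^ 2)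
        (L * t * ‖v‖ ^ 2) t := by
      have : HasDerivAt (fun t : ℝ => t ^ 2) (2 * t) t := by
        simpa using hasDerivAt_pow 2 t
      have := (this.const_mul (L / 2)).mul_const (‖v‖ ^ 2)
      refine this.congr_deriv ?_
      ring
    exact (h1.sub h2).sub h3
  have hanti : AntitoneOn g (Set.Icc (0:ℝ) 1) := by
    apply antitoneOn_of_deriv_nonpos (convex_Icc 0 1)
    · exact fun t _ => (key t).continuousAt.continuousWithinAt
    · intro t ht
      exact ((key t).differentiableAt).differentiableWithinAt
    · intro t ht
      rw [interior_Icc] at ht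
      rw [(key t).deriv]
      have hcs : (inner ℝ (gradient f (x + t • v) - gradient f x) v : ℝ)
          ≤ ‖gradient f (x + t • v) - gradient f x‖ * ‖v‖ := real_inner_le_norm _ _
      have hl := hlip (x + t • v) x
      have hnorm : ‖x + t • v - x‖ = t * ‖v‖ := by
        rw [add_sub_cancel_left, norm_smul, Real.norm_eq_abs, abs_of_pos ht.1]
      rw [hnorm] at hl
      have hbound : ‖gradient f (x + t • v) - gradient f x‖ * ‖v‖ ≤ L * (t * ‖v‖) * ‖v‖ :=
        mul_le_mul_of_nonneg_right hl (norm_nonneg v)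
      rw [inner_sub_left] at hcs
      nlinarith [norm_nonneg v]
  have h01 := hanti (Set.left_mem_Icc.2 one_pos.le) (Set.right_mem_Icc.2 one_pos.le) one_pos.le
  simp only [hg, zero_smul, add_zero, one_smul, zero_mul, zero_pow, mul_zero, sub_zero,
    one_pow, mul_one, one_mul] at h01
  linarith

/-- Descent lemma for an inexact gradient step: if `f : ℝ^d → ℝ` is differentiable
with `L`-Lipschitz gradient (`L > 0`), then for any `w, e` and any `h ≥ 0`, the
inexact step `w⁺ := w − h∇f(w) + e` satisfies
`f(w) − f(w⁺) ≥ h(1 − Lh)‖∇f(w)‖² − ‖∇f(w)‖·‖e‖ − L‖e‖²`. -/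
theorem inexact_descent_lemma {d : ℕ} (L : ℝ) (hL : 0 < L)
    (f : EuclideanSpace ℝ (Fin d) → ℝ)
    (hdiff : Differentiable ℝ f)
    (hlip : ∀ x y, ‖gradient f x - gradient f y‖ ≤ L * ‖x - y‖)
    (w e : EuclideanSpace ℝ (Fin d)) (h : ℝ) (hh : 0 ≤ h) :
    h * (1 - L * h) * ‖gradient f w‖ ^ 2 - ‖gradient f w‖ * ‖e‖ - L * ‖e‖ ^ 2 ≤
      f w - f (w - h • gradient f w + e) := by
  set g := gradient f w with hgdef
  have hpt : w - h • g + e = w + (e - h • g) := by abel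
  have hd := descent_aux L hL.le f hdiff hlip w (e - h • g)
  rw [← hpt] at hd
  have hinner : (inner ℝ g (e - h • g) : ℝ) = inner ℝ g e - h * ‖g‖ ^ 2 := by
    rw [inner_sub_right, real_inner_smul_right, real_inner_self_eq_norm_sq]
  have hnv : ‖e - h • g‖ ≤ ‖e‖ + h * ‖g‖ := by
    calc ‖e - h • g‖ ≤ ‖e‖ + ‖h • g‖ := norm_sub_le _ _
    _ = ‖e‖ + h * ‖g‖ := by rw [norm_smul, Real.norm_eq_abs, abs_of_nonneg hh]
  have hcs : (inner ℝ g e : ℝ) ≤ ‖g‖ * ‖e‖ := real_inner_le_norm _ _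
  have hsq : ‖e - h • g‖ ^ 2 ≤ (‖e‖ + h * ‖g‖) ^ 2 := by
    have := norm_nonneg (e - h • g)
    nlinarith
  nlinarith [norm_nonneg g, norm_nonneg e, sq_nonneg (h * ‖g‖ - ‖e‖), mul_nonneg hh (norm_nonneg g)]
end

section
/- Let M ≥ 1 and let f₁, …, f_M : ℝ^d → ℝ be differentiable and μ-strongly convex (μ > 0), and set f := (1/M)·∑_{i=1}^M f_i. Let w_i* be the global minimizer of f_i for each i, let w* be the global minimizer of f, and let Ω ⊆ ℝ^d be a set containing w* and all the w_i*. If K ≥ 0 satisfies ‖∇f_i(x) − ∇f_j(x)‖ ≤ K for all indices i, j and all x ∈ Ω, then ∑_{i=1}^M ‖w* − w_i*‖ ≤ (M/μ)·K. -/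
open InnerProductSpace

variable {E : Type*} [NormedAddCommGroup E] [InnerProductSpace ℝ E] [CompleteSpace E]

local notation "⟪" x ", " y "⟫" => @inner ℝ _ _ x y

/-- directional derivative along a line in terms of the gradient -/
lemma aux_hasDerivAt_line {f : E → ℝ} (hf : Differentiable ℝ f) (x v : E) (t : ℝ) :
    HasDerivAt (fun t : ℝ => f (x + t • v)) ⟪gradient f (x + t • v), v⟫ t := by
  have h1 : HasDerivAt (fun t : ℝ => x + t • v) v t := by
    simpa using ((hasDerivAt_id t).smul_const v).const_add x
  have h2 : HasFDerivAt f (toDual ℝ E (gradient f (x + t • v))) (x + t • v) :=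
    ((hf _).hasGradientAt).hasFDerivAt
  simpa [InnerProductSpace.toDual_apply_apply, Function.comp_def] using h2.comp_hasDerivAt t h1

lemma aux_strong_mono {f : E → ℝ} {μ : ℝ} (hf : Differentiable ℝ f)
    (hsc : ConvexOn ℝ Set.univ (fun x => f x - μ / 2 * ‖x‖ ^ 2)) (x y : E) :
    μ * ‖y - x‖ ^ 2 ≤ ⟪gradient f y - gradient f x, y - x⟫ := by
  set v := y - x with hv
  set g : ℝ → ℝ := fun t => f (x + t • v) -
      μ / 2 * (‖x‖ ^ 2 + 2 * t * ⟪x, v⟫ + t ^ 2 * ‖v‖ ^ 2) with hg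
  have hconv : ConvexOn ℝ Set.univ g := by
    have := hsc.comp_affineMap (AffineMap.lineMap x y : ℝ →ᵃ[ℝ] E)
    simp only [Set.preimage_univ] at this
    convert this using 1
    · rfl
    · rfl
    · rfl
    · rfl
    funext t
    simp only [Function.comp, AffineMap.lineMap_apply, vsub_eq_sub, vadd_eq_add, hg]
    have hnorm : ‖x + t • v‖ ^ 2 = ‖x‖ ^ 2 + 2 * t * ⟪x, v⟫ + t ^ 2 * ‖v‖ ^ 2 := by
      rw [norm_add_sq_real, real_inner_smul_right, norm_smul]
      simp [mul_pow]
      ring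
    rw [← hnorm, add_comm (t • v) x]
  have hderiv : ∀ t : ℝ, HasDerivAt g
      (⟪gradient f (x + t • v), v⟫ - μ / 2 * (2 * ⟪x, v⟫ + 2 * t * ‖v‖ ^ 2)) t := by
    intro t
    have hpoly : HasDerivAt (fun t : ℝ => μ / 2 * (‖x‖ ^ 2 + 2 * t * ⟪x, v⟫ + t ^ 2 * ‖v‖ ^ 2))
        (μ / 2 * (2 * ⟪x, v⟫ + 2 * t * ‖v‖ ^ 2)) t := by
      have h1 : HasDerivAt (fun t : ℝ => ‖x‖ ^ 2 + 2 * t * ⟪x, v⟫ + t ^ 2 * ‖v‖ ^ 2)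
          (2 * ⟪x, v⟫ + 2 * t * ‖v‖ ^ 2) t := by
        have ha : HasDerivAt (fun t : ℝ => 2 * t * ⟪x, v⟫) (2 * ⟪x, v⟫) t := by
          simpa [mul_comm, mul_assoc] using ((hasDerivAt_id t).const_mul 2).mul_const ⟪x, v⟫
        have hb : HasDerivAt (fun t : ℝ => t ^ 2 * ‖v‖ ^ 2) (2 * t * ‖v‖ ^ 2) t := by
          have := (hasDerivAt_pow 2 t).mul_const (‖v‖ ^ 2)
          convert this using 1
          · rfl
          · rfl
          · ring
        have := (ha.const_add (‖x‖ ^ 2)).add hb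
        exact this
      exact h1.const_mul (μ / 2)
    exact (aux_hasDerivAt_line hf x v t).sub hpoly
  have h01 : (0:ℝ) < 1 := one_pos
  have hle1 : (⟪gradient f (x + (0:ℝ) • v), v⟫ - μ / 2 * (2 * ⟪x, v⟫ + 2 * 0 * ‖v‖ ^ 2))
      ≤ slope g 0 1 :=
    hconv.le_slope_of_hasDerivAt (Set.mem_univ _) (Set.mem_univ _) h01 (hderiv 0)
  have hle2 : slope g 0 1 ≤
      (⟪gradient f (x + (1:ℝ) • v), v⟫ - μ / 2 * (2 * ⟪x, v⟫ + 2 * 1 * ‖v‖ ^ 2)) :=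
    hconv.slope_le_of_hasDerivAt (Set.mem_univ _) (Set.mem_univ _) h01 (hderiv 1)
  have hle := hle1.trans hle2
  have hx0 : x + (0:ℝ) • v = x := by simp
  have hx1 : x + (1:ℝ) • v = y := by simp [hv]
  rw [hx0, hx1] at hle
  rw [inner_sub_left]
  nlinarith [hle]


lemma aux_gradient_zero {f : E → ℝ} {w : E} (h : ∀ z, f w ≤ f z) :
    gradient f w = 0 := by
  have hmin : IsLocalMin f w := Filter.Eventually.of_forall h
  rw [gradient, hmin.fderiv_eq_zero, map_zero]


/-- Sum of distances between local and global minimizers: let `f₁, …, f_M : ℝ^d → ℝ`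
(`M ≥ 1`) be differentiable and `μ`-strongly convex, `f := (1/M)∑ f_i`, let `w_i*`
be the global minimizer of `f_i`, `w*` the global minimizer of `f`, `Ω` a set
containing `w*` and every `w_i*`, and suppose `‖∇f_i(x) − ∇f_j(x)‖ ≤ K` for all
`i, j` and all `x ∈ Ω`. Then `∑_i ‖w* − w_i*‖ ≤ (M/μ)·K`. -/
theorem sum_minimizer_distance_le {d M : ℕ} (hM : 1 ≤ M) (μ : ℝ) (hμ : 0 < μ)
    (f : Fin M → EuclideanSpace ℝ (Fin d) → ℝ)
    (hdiff : ∀ i, Differentiable ℝ (f i))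
    (hsc : ∀ i, ConvexOn ℝ Set.univ (fun x => f i x - μ / 2 * ‖x‖ ^ 2))
    (wi : Fin M → EuclideanSpace ℝ (Fin d))
    (hwi : ∀ i, ∀ z, f i (wi i) ≤ f i z)
    (wstar : EuclideanSpace ℝ (Fin d))
    (hwstar : ∀ z, (1 / (M : ℝ)) * ∑ i, f i wstar ≤ (1 / (M : ℝ)) * ∑ i, f i z)
    (Ω : Set (EuclideanSpace ℝ (Fin d)))
    (hΩstar : wstar ∈ Ω) (hΩi : ∀ i, wi i ∈ Ω)
    (K : ℝ) (hK : 0 ≤ K)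
    (hbound : ∀ i j, ∀ x ∈ Ω, ‖gradient (f i) x - gradient (f j) x‖ ≤ K) :
    ∑ i, ‖wstar - wi i‖ ≤ (M : ℝ) / μ * K := by
  have hMpos : (0:ℝ) < (M : ℝ) := by exact_mod_cast Nat.lt_of_lt_of_le Nat.zero_lt_one hM
  -- gradients at local minimizers vanish
  have hgi : ∀ i, gradient (f i) (wi i) = 0 := fun i => aux_gradient_zero (hwi i)
  -- sum of gradients at wstar vanishes
  have hsum : ∑ i, gradient (f i) wstar = 0 := by
    have hmin : ∀ z, (∑ i, f i wstar) ≤ ∑ i, f i z := by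
      intro z
      have h := hwstar z
      have hinv : (0:ℝ) < 1 / (M : ℝ) := by positivity
      exact le_of_mul_le_mul_left h hinv
    have hloc : IsLocalMin (fun x => ∑ i, f i x) wstar := Filter.Eventually.of_forall hmin
    have hfd : fderiv ℝ (fun x => ∑ i, f i x) wstar = 0 := hloc.fderiv_eq_zero
    have hfds : fderiv ℝ (fun x => ∑ i, f i x) wstar = ∑ i, fderiv ℝ (f i) wstar :=
      fderiv_fun_sum (fun i _ => (hdiff i).differentiableAt)
    have : ∑ i, fderiv ℝ (f i) wstar = 0 := by rw [← hfds, hfd]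
    calc ∑ i, gradient (f i) wstar
        = (InnerProductSpace.toDual ℝ _).symm (∑ i, fderiv ℝ (f i) wstar) := by
          simp [gradient, map_sum]
      _ = 0 := by rw [this, map_zero]
  -- each gradient at wstar is small
  have hKi : ∀ i, ‖gradient (f i) wstar‖ ≤ K := by
    intro i
    have key : (M:ℝ) • gradient (f i) wstar
        = ∑ j, (gradient (f i) wstar - gradient (f j) wstar) := by
      rw [Finset.sum_sub_distrib, hsum, sub_zero, Finset.sum_const, Finset.card_univ,
        Fintype.card_fin, Nat.cast_smul_eq_nsmul ℝ]
    have hnorm : (M:ℝ) * ‖gradient (f i) wstar‖ ≤ (M:ℝ) * K := by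
      calc (M:ℝ) * ‖gradient (f i) wstar‖ = ‖(M:ℝ) • gradient (f i) wstar‖ := by
            rw [norm_smul]; simp [abs_of_pos hMpos]
        _ = ‖∑ j, (gradient (f i) wstar - gradient (f j) wstar)‖ := by rw [key]
        _ ≤ ∑ j : Fin M, ‖gradient (f i) wstar - gradient (f j) wstar‖ :=
            norm_sum_le _ _
        _ ≤ ∑ _j : Fin M, K :=
            Finset.sum_le_sum (fun j _ => hbound i j wstar hΩstar)
        _ = (M:ℝ) * K := by simp [mul_comm]
    exact le_of_mul_le_mul_left hnorm hMpos
  -- per-index distance bound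
  have hdist : ∀ i, ‖wstar - wi i‖ ≤ K / μ := by
    intro i
    have hm := aux_strong_mono (hdiff i) (hsc i) (wi i) wstar
    rw [hgi i, sub_zero] at hm
    have hcs : @inner ℝ _ _ (gradient (f i) wstar) (wstar - wi i)
        ≤ ‖gradient (f i) wstar‖ * ‖wstar - wi i‖ := real_inner_le_norm _ _
    have hKb : ‖gradient (f i) wstar‖ * ‖wstar - wi i‖ ≤ K * ‖wstar - wi i‖ :=
      mul_le_mul_of_nonneg_right (hKi i) (norm_nonneg _)
    have hn : (0:ℝ) ≤ ‖wstar - wi i‖ := norm_nonneg _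
    have h2 : μ * ‖wstar - wi i‖ ^ 2 ≤ K * ‖wstar - wi i‖ := le_trans hm (hcs.trans hKb)
    rw [le_div_iff₀ hμ]
    nlinarith [h2, hn, hμ, hK]
  calc ∑ i, ‖wstar - wi i‖ ≤ ∑ _i : Fin M, K / μ := Finset.sum_le_sum (fun i _ => hdist i)
    _ = (M:ℝ) * (K / μ) := by simp [mul_comm]
    _ = (M:ℝ) / μ * K := by ring
end

section
/- Let Q be a row stochastic M×M real matrix, let c ∈ ℝ^M, and let η ≥ 0 satisfy |Q_{ji} − c_i| ≤ η for all indices j, i. Let P := (1/M)·11ᵀ denote the exact averaging matrix. Then for any x, t ∈ ℝ^M and any h ≥ 0, the vector x⁺ := Qx − h·t satisfies ‖x⁺ − Px⁺‖ ≤ M^{3/2}·η·‖x − Px‖ + h·‖t − Pt‖. -/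
/-- The Euclidean norm of a vector in `ℝ^M`. -/
noncomputable def evnorm {M : ℕ} (v : Fin M → ℝ) : ℝ :=
  Real.sqrt (∑ i, v i ^ 2)

/-- The exact averaging matrix `P = (1/M)·11ᵀ`, all of whose entries are `1/M`. -/
noncomputable def avgMatrix (M : ℕ) : Matrix (Fin M) (Fin M) ℝ :=
  Matrix.of fun _ _ => 1 / (M : ℝ)

lemma evnorm_nonneg {M : ℕ} (v : Fin M → ℝ) : 0 ≤ evnorm v := Real.sqrt_nonneg _

lemma evnorm_mono {M : ℕ} {u v : Fin M → ℝ} (h : ∑ i, u i ^ 2 ≤ ∑ i, v i ^ 2) :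
    evnorm u ≤ evnorm v := Real.sqrt_le_sqrt h

lemma evnorm_eq_norm {M : ℕ} (v : Fin M → ℝ) :
    evnorm v = ‖(WithLp.equiv 2 (Fin M → ℝ)).symm v‖ := by
  rw [EuclideanSpace.norm_eq]
  simp [evnorm, sq_abs]

lemma evnorm_add_le {M : ℕ} (u v : Fin M → ℝ) :
    evnorm (u + v) ≤ evnorm u + evnorm v := by
  simp only [evnorm_eq_norm]
  exact norm_add_le ((WithLp.equiv 2 (Fin M → ℝ)).symm u)
    ((WithLp.equiv 2 (Fin M → ℝ)).symm v)

lemma evnorm_smul {M : ℕ} (a : ℝ) (v : Fin M → ℝ) :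
    evnorm (a • v) = |a| * evnorm v := by
  simp only [evnorm_eq_norm]
  have : (WithLp.equiv 2 (Fin M → ℝ)).symm (a • v)
      = a • (WithLp.equiv 2 (Fin M → ℝ)).symm v := rfl
  rw [this, norm_smul, Real.norm_eq_abs]

lemma avg_mulVec {M : ℕ} (v : Fin M → ℝ) (j : Fin M) :
    (avgMatrix M).mulVec v j = (∑ i, v i) / M := by
  simp only [avgMatrix, Matrix.mulVec, dotProduct, Matrix.of_apply,
    Finset.sum_div]
  exact Finset.sum_congr rfl fun i _ => by ring

/-- removing the average does not increase the Euclidean norm -/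
lemma evnorm_center_le {M : ℕ} (hM : 0 < M) (w : Fin M → ℝ) :
    evnorm (w - (avgMatrix M).mulVec w) ≤ evnorm w := by
  apply evnorm_mono
  have hM' : (M : ℝ) ≠ 0 := by positivity
  set S := ∑ i, w i with hS
  have : ∀ i, (w - (avgMatrix M).mulVec w) i ^ 2
      = w i ^ 2 - 2 * (S / M) * w i + (S / M) ^ 2 := by
    intro i
    simp only [Pi.sub_apply, avg_mulVec, ← hS]
    ring
  rw [Finset.sum_congr rfl fun i _ => this i]
  rw [Finset.sum_add_distrib, Finset.sum_sub_distrib, ← Finset.mul_sum,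
    Finset.sum_const, Finset.card_univ, Fintype.card_fin, ← hS]
  have : S ^ 2 / M ≥ 0 := by positivity
  have key : (M : ℕ) • (S / M) ^ 2 = S ^ 2 / M := by
    rw [nsmul_eq_mul]
    field_simp
  rw [key]
  have : 2 * (S / M) * S = 2 * (S ^ 2 / M) := by field_simp
  rw [this]
  nlinarith [sq_nonneg S, (show 0 ≤ S ^ 2 / M by positivity)]

/-- Contraction of the exact consensus error: let `Q` be row stochastic, `c ∈ ℝ^M`,
and `η ≥ 0` with `|Q_{ji} − c_i| ≤ η` for all `j, i`. Let `P := (1/M)·11ᵀ`. Then for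
any `x, t ∈ ℝ^M` and `h ≥ 0`, the vector `x⁺ := Qx − h·t` satisfies
`‖x⁺ − Px⁺‖ ≤ M^{3/2}·η·‖x − Px‖ + h·‖t − Pt‖`. -/
theorem exact_consensus_error_contraction {M : ℕ} (hM : 0 < M)
    (Q : Matrix (Fin M) (Fin M) ℝ) (hQ : RowStochastic Q)
    (c : Fin M → ℝ) (η : ℝ) (hη : 0 ≤ η)
    (hclose : ∀ j i, |Q j i - c i| ≤ η)
    (x t : Fin M → ℝ) (h : ℝ) (hh : 0 ≤ h) :
    evnorm (Q.mulVec x - h • t - (avgMatrix M).mulVec (Q.mulVec x - h • t)) ≤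
      (M : ℝ) ^ ((3 : ℝ) / 2) * η * evnorm (x - (avgMatrix M).mulVec x) +
        h * evnorm (t - (avgMatrix M).mulVec t) := by
  have hM' : (M : ℝ) ≠ 0 := by positivity
  have hM1 : (1 : ℝ) ≤ M := by exact_mod_cast hM
  -- centering operator
  set d : (Fin M → ℝ) → (Fin M → ℝ) :=
    fun v => v - (avgMatrix M).mulVec v with hd
  have d_apply : ∀ v j, d v j = v j - (∑ i, v i) / M := by
    intro v j; simp [hd, avg_mulVec]
  -- d is linear in the needed sense
  have d_lin : d (Q.mulVec x - h • t) = d (Q.mulVec x) + (-h) • d t := by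
    funext j
    simp only [d_apply, Pi.add_apply, Pi.smul_apply, Pi.sub_apply, smul_eq_mul]
    rw [Finset.sum_sub_distrib]
    simp only [Pi.smul_apply, smul_eq_mul, ← Finset.mul_sum]
    field_simp
    ring
  -- shift invariance: d (v + const k) = d v
  have d_shift : ∀ (v : Fin M → ℝ) (k : ℝ), d (fun j => v j + k) = d v := by
    intro v k
    funext j
    simp only [d_apply]
    rw [Finset.sum_add_distrib, Finset.sum_const, Finset.card_univ, Fintype.card_fin,
      nsmul_eq_mul]
    field_simp
    ring
  -- set y := d x, A := Q - 1cᵀ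
  set y : Fin M → ℝ := d x with hy
  set A : Matrix (Fin M) (Fin M) ℝ := Matrix.of fun j i => Q j i - c i with hA
  -- Qx = Ay + const
  have key : d (Q.mulVec x) = d (A.mulVec y) := by
    have : Q.mulVec x = fun j => A.mulVec y j + ((∑ i, x i) / M + ∑ i, c i * y i) := by
      funext j
      simp only [Matrix.mulVec, dotProduct, hA, Matrix.of_apply]
      have hx : ∀ i, x i = y i + (∑ i, x i) / M := by
        intro i; simp [hy, d_apply]
      calc ∑ i, Q j i * x i = ∑ i, Q j i * (y i + (∑ i, x i) / M) := by
            exact Finset.sum_congr rfl fun i _ => by rw [← hx i]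
        _ = ∑ i, Q j i * y i + (∑ i, Q j i) * ((∑ i, x i) / M) := by
            simp only [mul_add, Finset.sum_add_distrib, Finset.sum_mul]
        _ = ∑ i, Q j i * y i + (∑ i, x i) / M := by rw [hQ.2 j, one_mul]
        _ = ∑ i, (Q j i - c i) * y i + ((∑ i, x i) / M + ∑ i, c i * y i) := by
            simp only [sub_mul, Finset.sum_sub_distrib]
            ring
    rw [this, d_shift]
  -- norm bound for A y
  have hAy : evnorm (A.mulVec y) ≤ (M : ℝ) * η * evnorm y := by
    have habs : ∀ j, |A.mulVec y j| ≤ η * ∑ i, |y i| := by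
      intro j
      simp only [Matrix.mulVec, dotProduct, hA, Matrix.of_apply]
      calc |∑ i, (Q j i - c i) * y i| ≤ ∑ i, |(Q j i - c i) * y i| :=
            Finset.abs_sum_le_sum_abs _ _
        _ ≤ ∑ i, η * |y i| := by
            apply Finset.sum_le_sum
            intro i _
            rw [abs_mul]
            exact mul_le_mul_of_nonneg_right (hclose j i) (abs_nonneg _)
        _ = η * ∑ i, |y i| := by rw [Finset.mul_sum]
    have hsum : (∑ i, |y i|) ^ 2 ≤ (M : ℝ) * ∑ i, y i ^ 2 := by
      have := sq_sum_le_card_mul_sum_sq (s := (Finset.univ : Finset (Fin M)))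
        (f := fun i => |y i|)
      simpa [sq_abs, Finset.card_univ] using this
    have hsq : ∑ j, A.mulVec y j ^ 2 ≤ (M : ℝ) ^ 2 * η ^ 2 * ∑ i, y i ^ 2 := by
      calc ∑ j, A.mulVec y j ^ 2 ≤ ∑ j : Fin M, (η * ∑ i, |y i|) ^ 2 := by
            apply Finset.sum_le_sum
            intro j _
            rw [← sq_abs (A.mulVec y j)]
            apply pow_le_pow_left₀ (abs_nonneg _) (habs j)
        _ = (M : ℝ) * (η ^ 2 * (∑ i, |y i|) ^ 2) := by
            rw [Finset.sum_const, Finset.card_univ, Fintype.card_fin, nsmul_eq_mul]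
            ring
        _ ≤ (M : ℝ) * (η ^ 2 * ((M : ℝ) * ∑ i, y i ^ 2)) := by
            apply mul_le_mul_of_nonneg_left _ (by positivity)
            exact mul_le_mul_of_nonneg_left hsum (by positivity)
        _ = (M : ℝ) ^ 2 * η ^ 2 * ∑ i, y i ^ 2 := by ring
    have : evnorm (A.mulVec y) ≤ Real.sqrt ((M : ℝ) ^ 2 * η ^ 2 * ∑ i, y i ^ 2) :=
      Real.sqrt_le_sqrt hsq
    calc evnorm (A.mulVec y) ≤ Real.sqrt ((M : ℝ) ^ 2 * η ^ 2 * ∑ i, y i ^ 2) := this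
      _ = (M : ℝ) * η * evnorm y := by
          rw [evnorm, ← Real.sqrt_mul_self (by positivity : (0:ℝ) ≤ (M : ℝ) * η)]
          rw [← Real.sqrt_mul (by positivity)]
          congr 1
          ring
  -- main bound for the Q part
  have hQpart : evnorm (d (Q.mulVec x)) ≤ (M : ℝ) * η * evnorm y := by
    rw [key]
    exact le_trans (evnorm_center_le hM _) hAy
  -- M ≤ M^(3/2)
  have hMle : (M : ℝ) ≤ (M : ℝ) ^ ((3 : ℝ) / 2) := by
    calc (M : ℝ) = (M : ℝ) ^ (1 : ℝ) := (Real.rpow_one _).symm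
      _ ≤ (M : ℝ) ^ ((3 : ℝ) / 2) :=
        Real.rpow_le_rpow_of_exponent_le hM1 (by norm_num)
  -- combine
  calc evnorm (d (Q.mulVec x - h • t))
      ≤ evnorm (d (Q.mulVec x)) + evnorm ((-h) • d t) := by
        rw [d_lin]; exact evnorm_add_le _ _
    _ = evnorm (d (Q.mulVec x)) + h * evnorm (d t) := by
        rw [evnorm_smul, abs_neg, abs_of_nonneg hh]
    _ ≤ (M : ℝ) * η * evnorm y + h * evnorm (d t) := by
        exact add_le_add_left hQpart _
    _ ≤ (M : ℝ) ^ ((3 : ℝ) / 2) * η * evnorm y + h * evnorm (d t) := by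
        apply add_le_add_left
        apply mul_le_mul_of_nonneg_right _ (evnorm_nonneg _)
        exact mul_le_mul_of_nonneg_right hMle hη
end

section
/- Let Q be a row stochastic M×M real matrix, and let c, c′ ∈ ℝ^M be stochastic vectors satisfying Qᵀc′ = c (equivalently (1c′ᵀ)·Q = 1cᵀ). Let η ≥ 0 satisfy |Q_{ji} − c_i| ≤ η for all indices j, i. Then for any x, t ∈ ℝ^M and any h ≥ 0, the vector x⁺ := Qx − h·t satisfies ‖(1c′ᵀ)x⁺ − x⁺‖ ≤ M^{3/2}·(√M + 1)·η·‖(1cᵀ)x − x‖ + h·(√M + 1)·‖(1cᵀ)t − t‖. -/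
/-- The rank-one matrix `1cᵀ`, all of whose rows equal `cᵀ`. -/
def rowMatrix {M : ℕ} (c : Fin M → ℝ) : Matrix (Fin M) (Fin M) ℝ :=
  Matrix.of fun _ i => c i

lemma evnorm_sq {M : ℕ} (v : Fin M → ℝ) : evnorm v ^ 2 = ∑ i, v i ^ 2 := by
  rw [evnorm, Real.sq_sqrt]
  exact Finset.sum_nonneg fun i _ => sq_nonneg _

lemma evnorm_le_of_sq_le {M : ℕ} {v : Fin M → ℝ} {b : ℝ} (hb : 0 ≤ b)
    (hv : ∑ i, v i ^ 2 ≤ b ^ 2) : evnorm v ≤ b := by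
  rw [evnorm]
  calc Real.sqrt (∑ i, v i ^ 2) ≤ Real.sqrt (b ^ 2) := Real.sqrt_le_sqrt hv
  _ = b := Real.sqrt_sq hb

lemma evnorm_mulVec_le {M : ℕ} {A : Matrix (Fin M) (Fin M) ℝ} {η : ℝ} (hη : 0 ≤ η)
    (hA : ∀ i j, |A i j| ≤ η) (v : Fin M → ℝ) :
    evnorm (A.mulVec v) ≤ M * η * evnorm v := by
  apply evnorm_le_of_sq_le
  · exact mul_nonneg (mul_nonneg (Nat.cast_nonneg M) hη) (evnorm_nonneg v)
  have hrow : ∀ i, (A.mulVec v i) ^ 2 ≤ (M * η ^ 2) * ∑ j, v j ^ 2 := by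
    intro i
    have h1 : (∑ j, A i j * v j) ^ 2 ≤ (∑ j, A i j ^ 2) * ∑ j, v j ^ 2 :=
      Finset.sum_mul_sq_le_sq_mul_sq _ _ _
    have h2 : (∑ j, A i j ^ 2) ≤ M * η ^ 2 := by
      calc (∑ j, A i j ^ 2) ≤ ∑ _j : Fin M, η ^ 2 := by
            apply Finset.sum_le_sum
            intro j _
            calc A i j ^ 2 = |A i j| ^ 2 := (sq_abs _).symm
            _ ≤ η ^ 2 := by
                apply pow_le_pow_left₀ (abs_nonneg _) (hA i j)
      _ = M * η ^ 2 := by simp [mul_comm]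
    calc (A.mulVec v i) ^ 2 = (∑ j, A i j * v j) ^ 2 := by
          simp [Matrix.mulVec, dotProduct]
    _ ≤ (∑ j, A i j ^ 2) * ∑ j, v j ^ 2 := h1
    _ ≤ (M * η ^ 2) * ∑ j, v j ^ 2 := by
        apply mul_le_mul_of_nonneg_right h2
        exact Finset.sum_nonneg fun j _ => sq_nonneg _
  calc ∑ i, (A.mulVec v i) ^ 2 ≤ ∑ _i : Fin M, (M * η ^ 2) * ∑ j, v j ^ 2 :=
        Finset.sum_le_sum fun i _ => hrow i
  _ = (M * η * evnorm v) ^ 2 := by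
      rw [Finset.sum_const, ← evnorm_sq v]
      simp
      ring

lemma evnorm_const {M : ℕ} (a : ℝ) :
    evnorm (fun _ : Fin M => a) = Real.sqrt M * |a| := by
  rw [evnorm]
  rw [Finset.sum_const]
  simp only [Finset.card_univ, Fintype.card_fin, nsmul_eq_mul]
  rw [Real.sqrt_mul (by positivity), Real.sqrt_sq_eq_abs]

/-- Contraction of the inexact consensus error: let `Q` be row stochastic, `c, c'`
stochastic vectors with `Qᵀc' = c` (equivalently `(1c'ᵀ)·Q = 1cᵀ`), and `η ≥ 0` with
`|Q_{ji} − c_i| ≤ η` for all `j, i`. Then for any `x, t ∈ ℝ^M` and `h ≥ 0`, the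
vector `x⁺ := Qx − h·t` satisfies
`‖(1c'ᵀ)x⁺ − x⁺‖ ≤ M^{3/2}(√M + 1)·η·‖(1cᵀ)x − x‖ + h(√M + 1)·‖(1cᵀ)t − t‖`. -/
theorem inexact_consensus_error_contraction {M : ℕ} (hM : 0 < M)
    (Q : Matrix (Fin M) (Fin M) ℝ) (hQ : RowStochastic Q)
    (c c' : Fin M → ℝ)
    (hc0 : ∀ i, 0 ≤ c i) (hc1 : ∑ i, c i = 1)
    (hc'0 : ∀ i, 0 ≤ c' i) (hc'1 : ∑ i, c' i = 1)
    (hQc : Matrix.vecMul c' Q = c)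
    (η : ℝ) (hη : 0 ≤ η) (hclose : ∀ j i, |Q j i - c i| ≤ η)
    (x t : Fin M → ℝ) (h : ℝ) (hh : 0 ≤ h) :
    evnorm ((rowMatrix c').mulVec (Q.mulVec x - h • t) - (Q.mulVec x - h • t)) ≤
      (M : ℝ) ^ ((3 : ℝ) / 2) * (Real.sqrt M + 1) * η *
          evnorm ((rowMatrix c).mulVec x - x) +
        h * (Real.sqrt M + 1) * evnorm ((rowMatrix c).mulVec t - t) := by
  -- notation
  set ex : Fin M → ℝ := (rowMatrix c).mulVec x - x with hex
  set et : Fin M → ℝ := (rowMatrix c).mulVec t - t with het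
  set A : Matrix (Fin M) (Fin M) ℝ := Q - rowMatrix c with hA
  have hc'Q : ∀ k, (∑ i, c' i * Q i k) = c k := by
    intro k
    have := congrFun hQc k
    simpa [Matrix.vecMul, dotProduct] using this
  have hQrow : ∀ j, ∑ i, Q j i = 1 := hQ.2
  -- the inner product of c' with the mulVec
  have hswap : (∑ i, c' i * (Q.mulVec x) i) = ∑ k, c k * x k := by
    simp only [Matrix.mulVec, dotProduct]
    calc (∑ i, c' i * ∑ k, Q i k * x k) = ∑ i, ∑ k, c' i * Q i k * x k := by
          simp_rw [Finset.mul_sum, mul_assoc]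
    _ = ∑ k, ∑ i, c' i * Q i k * x k := Finset.sum_comm
    _ = ∑ k, (∑ i, c' i * Q i k) * x k := by simp_rw [Finset.sum_mul]
    _ = ∑ k, c k * x k := by simp_rw [hc'Q]
  have hrm : ∀ (y : Fin M → ℝ) (j : Fin M), (rowMatrix c).mulVec y j = ∑ k, c k * y k := by
    intro y j
    simp [rowMatrix, Matrix.mulVec, dotProduct]
  set w : Fin M → ℝ := fun _ => ∑ i, c' i * et i with hw
  -- the decomposition identity
  have hLj : ∀ j, ((rowMatrix c').mulVec (Q.mulVec x - h • t) - (Q.mulVec x - h • t)) j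
      = (∑ k, c k * x k) - (Q.mulVec x) j - h * (∑ i, c' i * t i) + h * t j := by
    intro j
    have h1 : (rowMatrix c').mulVec (Q.mulVec x - h • t) j
        = ∑ i, c' i * ((Q.mulVec x) i - h * t i) := by
      simp [rowMatrix, Matrix.mulVec, dotProduct]
    have h2 : (∑ i, c' i * ((Q.mulVec x) i - h * t i))
        = (∑ i, c' i * (Q.mulVec x) i) - h * ∑ i, c' i * t i := by
      rw [Finset.mul_sum]
      rw [← Finset.sum_sub_distrib]
      apply Finset.sum_congr rfl
      intro i _
      ring
    simp only [Pi.sub_apply, Pi.smul_apply, smul_eq_mul]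
    rw [h1, h2, hswap]
    ring
  have hAj : ∀ j, (A.mulVec ex) j = (∑ k, c k * x k) - (Q.mulVec x) j := by
    intro j
    have h1 : (A.mulVec ex) j = ∑ i, (Q j i - c i) * ((∑ k, c k * x k) - x i) := by
      simp only [hA, hex, Matrix.mulVec, dotProduct, Matrix.sub_apply, Pi.sub_apply,
        rowMatrix, Matrix.of_apply]
    rw [h1]
    have h2 : ∀ i, (Q j i - c i) * ((∑ k, c k * x k) - x i)
        = Q j i * (∑ k, c k * x k) - c i * (∑ k, c k * x k) - Q j i * x i + c i * x i := by
      intro i; ring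
    rw [Finset.sum_congr rfl fun i _ => h2 i]
    simp only [Finset.sum_add_distrib, Finset.sum_sub_distrib, ← Finset.sum_mul]
    rw [hQrow j, hc1]
    simp only [Matrix.mulVec, dotProduct]
    ring
  have hetj : ∀ i, et i = (∑ k, c k * t k) - t i := by
    intro i
    simp only [het, Pi.sub_apply, hrm t i]
  have hwj : ∀ (j : Fin M), w j = (∑ k, c k * t k) - ∑ i, c' i * t i := by
    intro j
    simp only [hw]
    calc (∑ i, c' i * et i) = ∑ i, (c' i * (∑ k, c k * t k) - c' i * t i) := by
          apply Finset.sum_congr rfl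
          intro i _
          rw [hetj i]; ring
    _ = (∑ i, c' i) * (∑ k, c k * t k) - ∑ i, c' i * t i := by
        rw [Finset.sum_sub_distrib, ← Finset.sum_mul]
    _ = (∑ k, c k * t k) - ∑ i, c' i * t i := by rw [hc'1, one_mul]
  have hdecomp : (rowMatrix c').mulVec (Q.mulVec x - h • t) - (Q.mulVec x - h • t)
      = A.mulVec ex + ((-h) • et + h • w) := by
    funext j
    rw [hLj j]
    simp only [Pi.add_apply, Pi.smul_apply, smul_eq_mul]
    rw [hAj j, hetj j, hwj j]
    ring
  -- bounds on the three pieces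
  have b1 : evnorm (A.mulVec ex) ≤ (M : ℝ) * η * evnorm ex := by
    apply evnorm_mulVec_le hη
    intro i j
    simpa [hA, rowMatrix] using hclose i j
  have b2 : evnorm ((-h) • et) = h * evnorm et := by
    rw [evnorm_smul, abs_neg, abs_of_nonneg hh]
  have b3 : evnorm (h • w) ≤ h * (Real.sqrt M * evnorm et) := by
    rw [evnorm_smul, abs_of_nonneg hh]
    apply mul_le_mul_of_nonneg_left _ hh
    have hwc : evnorm w = Real.sqrt M * |∑ i, c' i * et i| := evnorm_const _
    rw [hwc]
    apply mul_le_mul_of_nonneg_left _ (Real.sqrt_nonneg _)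
    -- Cauchy-Schwarz with ∑ c'^2 ≤ 1
    have hcs : (∑ i, c' i * et i) ^ 2 ≤ (∑ i, c' i ^ 2) * ∑ i, et i ^ 2 :=
      Finset.sum_mul_sq_le_sq_mul_sq _ _ _
    have hc'sq : (∑ i, c' i ^ 2) ≤ 1 := by
      calc (∑ i, c' i ^ 2) ≤ (∑ i, c' i) ^ 2 :=
            Finset.sum_sq_le_sq_sum_of_nonneg fun i _ => hc'0 i
      _ = 1 := by rw [hc'1]; norm_num
    have h3 : (∑ i, c' i * et i) ^ 2 ≤ ∑ i, et i ^ 2 := by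
      calc (∑ i, c' i * et i) ^ 2 ≤ (∑ i, c' i ^ 2) * ∑ i, et i ^ 2 := hcs
      _ ≤ 1 * ∑ i, et i ^ 2 := by
          apply mul_le_mul_of_nonneg_right hc'sq
          exact Finset.sum_nonneg fun i _ => sq_nonneg _
      _ = ∑ i, et i ^ 2 := one_mul _
    calc |∑ i, c' i * et i| = Real.sqrt ((∑ i, c' i * et i) ^ 2) :=
          (Real.sqrt_sq_eq_abs _).symm
    _ ≤ Real.sqrt (∑ i, et i ^ 2) := Real.sqrt_le_sqrt h3
    _ = evnorm et := rfl
  -- combine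
  rw [hdecomp]
  have tri : evnorm (A.mulVec ex + ((-h) • et + h • w))
      ≤ evnorm (A.mulVec ex) + (evnorm ((-h) • et) + evnorm (h • w)) := by
    calc evnorm (A.mulVec ex + ((-h) • et + h • w))
        ≤ evnorm (A.mulVec ex) + evnorm ((-h) • et + h • w) := evnorm_add_le _ _
    _ ≤ evnorm (A.mulVec ex) + (evnorm ((-h) • et) + evnorm (h • w)) := by
        have := evnorm_add_le ((-h) • et) (h • w)
        linarith
  have hM1 : (1 : ℝ) ≤ (M : ℝ) := by exact_mod_cast hM
  have hMle : (M : ℝ) ≤ (M : ℝ) ^ ((3 : ℝ) / 2) * (Real.sqrt M + 1) := by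
    calc (M : ℝ) = (M : ℝ) ^ (1 : ℝ) := (Real.rpow_one _).symm
    _ ≤ (M : ℝ) ^ ((3 : ℝ) / 2) := Real.rpow_le_rpow_of_exponent_le hM1 (by norm_num)
    _ ≤ (M : ℝ) ^ ((3 : ℝ) / 2) * (Real.sqrt M + 1) := by
        apply le_mul_of_one_le_right (Real.rpow_nonneg (by positivity) _)
        have := Real.sqrt_nonneg (M : ℝ)
        linarith
  have key1 : (M : ℝ) * η * evnorm ex
      ≤ (M : ℝ) ^ ((3 : ℝ) / 2) * (Real.sqrt M + 1) * η * evnorm ex := by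
    apply mul_le_mul_of_nonneg_right _ (evnorm_nonneg ex)
    exact mul_le_mul_of_nonneg_right hMle hη
  calc evnorm (A.mulVec ex + ((-h) • et + h • w))
      ≤ evnorm (A.mulVec ex) + (evnorm ((-h) • et) + evnorm (h • w)) := tri
  _ ≤ (M : ℝ) * η * evnorm ex + (h * evnorm et + h * (Real.sqrt M * evnorm et)) := by
      rw [b2]
      have := add_le_add b1 (add_le_add_left b3 (h * evnorm et))
      linarith
  _ ≤ (M : ℝ) ^ ((3 : ℝ) / 2) * (Real.sqrt M + 1) * η * evnorm ex
      + h * (Real.sqrt M + 1) * evnorm et := by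
      have : h * evnorm et + h * (Real.sqrt M * evnorm et)
          = h * (Real.sqrt M + 1) * evnorm et := by ring
      linarith [key1]
end
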